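/- arXiv:2505.24271 — 3 statements merged into one kernel-verified Lean document; each statement's English description precedes it below -/
import Mathlib

section
/- Let α, β ∈ ℝ satisfy α ≥ β ≥ 0 and α + β > 1, and let ε > 0. Set λ = max(1 − α, 0) if α ≠ 1 and λ = ε if α = 1. Then there exists a constant C > 0 (depending only on α, β, ε) such that for every a ∈ ℝ, ∑_{n ∈ ℤ} 1 / (⟨n⟩^α ⟨n − a⟩^β) ≤ C ⟨a⟩^{−(β − λ)}. -/
/-- The Japanese bracket `⟨x⟩ = (1 + |x|²)^{1/2}` on `ℝ`. -/
noncomputable def jb (x : ℝ) : ℝ := Real.sqrt (1 + x ^ 2)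


open Real

lemma jb_sq (x : ℝ) : jb x ^ 2 = 1 + x ^ 2 := by
  rw [jb, sq_sqrt]; positivity

lemma jb_nonneg (x : ℝ) : 0 ≤ jb x := Real.sqrt_nonneg _

lemma one_le_jb (x : ℝ) : 1 ≤ jb x := by
  have := Real.sqrt_le_sqrt (show (1:ℝ) ≤ 1 + x^2 by nlinarith)
  simpa [jb] using this

lemma jb_pos (x : ℝ) : 0 < jb x := lt_of_lt_of_le one_pos (one_le_jb x)

lemma abs_le_jb (x : ℝ) : |x| ≤ jb x := by
  rw [jb, show |x| = Real.sqrt (x^2) by rw [Real.sqrt_sq_eq_abs]]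
  exact Real.sqrt_le_sqrt (by nlinarith)

lemma jb_mono {x y : ℝ} (h : |x| ≤ |y|) : jb x ≤ jb y := by
  apply Real.sqrt_le_sqrt
  have := abs_nonneg x
  nlinarith [sq_abs x, sq_abs y]

lemma jb_neg (x : ℝ) : jb (-x) = jb x := by simp [jb]

lemma jb_zero : jb 0 = 1 := by simp [jb]

lemma jb_le_two_mul_jb {x θ : ℝ} (hθ : |θ| ≤ 1/2) : jb x ≤ 2 * jb (x - θ) := by
  have h4 : Real.sqrt 4 = 2 := by
    rw [show (4:ℝ) = 2^2 by norm_num, Real.sqrt_sq]; norm_num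
  rw [show (2:ℝ) * jb (x - θ) = Real.sqrt (4 * (1 + (x-θ)^2)) by
    rw [jb, Real.sqrt_mul (by norm_num), h4]]
  apply Real.sqrt_le_sqrt
  have h1 : -(1/2) ≤ θ := by cases abs_le.mp hθ; linarith
  have h2 : θ ≤ 1/2 := (abs_le.mp hθ).2
  nlinarith [sq_nonneg (x - 2*θ), sq_nonneg x]

lemma jb_half {x a : ℝ} (h : |a| ≤ 2 * |x|) : jb a ≤ 2 * jb x := by
  have h4 : Real.sqrt 4 = 2 := by
    rw [show (4:ℝ) = 2^2 by norm_num, Real.sqrt_sq]; norm_num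
  rw [show (2:ℝ) * jb x = Real.sqrt (4 * (1 + x^2)) by
    rw [jb, Real.sqrt_mul (by norm_num), h4]]
  apply Real.sqrt_le_sqrt
  have := abs_nonneg a
  nlinarith [sq_abs a, sq_abs x]

/-- antitone in base for negative exponents -/
lemma rpow_neg_anti {x y r : ℝ} (hx : 0 < x) (hxy : x ≤ y) (hr : 0 ≤ r) :
    y ^ (-r) ≤ x ^ (-r) := by
  rw [Real.rpow_neg (le_of_lt hx), Real.rpow_neg (by linarith)]
  exact inv_anti₀ (Real.rpow_pos_of_pos hx r) (Real.rpow_le_rpow hx.le hxy hr)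
-- chunk B : Bernoulli consequences
lemma B2 {q x : ℝ} (hq0 : 0 < q) (hq1 : q ≤ 1) (hx : 1 ≤ x) :
    q * x ^ (q - 1) ≤ x ^ q - (x - 1) ^ q := by
  have hxpos : (0:ℝ) < x := by linarith
  have hb : (1 + (-1/x)) ^ q ≤ 1 + q * (-1/x) := by
    apply rpow_one_add_le_one_add_mul_self _ hq0.le hq1
    rw [neg_div, neg_le_neg_iff, div_le_one hxpos]; exact hx
  have h1x : (0:ℝ) ≤ 1 + (-1/x) := by
    rw [neg_div, ← sub_eq_add_neg, sub_nonneg, div_le_one hxpos]; exact hx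
  have key : (x - 1) ^ q = x ^ q * (1 + (-1/x)) ^ q := by
    rw [← Real.mul_rpow hxpos.le h1x]
    congr 1; field_simp; ring
  have hxq : (0:ℝ) < x ^ q := Real.rpow_pos_of_pos hxpos q
  have h2 : (x-1)^q ≤ x ^ q * (1 + q * (-1/x)) := by
    rw [key]; exact mul_le_mul_of_nonneg_left hb hxq.le
  have h3 : x ^ q * (1 + q * (-1/x)) = x ^ q - q * (x ^ q / x) := by field_simp; ring
  have h4 : x ^ q / x = x ^ (q - 1) := by
    rw [Real.rpow_sub hxpos, Real.rpow_one]
  rw [h3, h4] at h2; linarith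

lemma B1 {q x : ℝ} (hq : 0 < q) (hx : 2 ≤ x) :
    q * x ^ (-(q + 1)) ≤ (x - 1) ^ (-q) - x ^ (-q) := by
  have hxpos : (0:ℝ) < x := by linarith
  have hx1 : (0:ℝ) < x - 1 := by linarith
  set s : ℝ := 1/x with hs
  have hs0 : 0 < s := by positivity
  have hs2 : s ≤ 1/2 := by rw [hs, div_le_div_iff₀ hxpos (by norm_num)]; linarith
  have h1s : (0:ℝ) < 1 - s := by linarith
  have key : 1 + q * s ≤ (1 - s) ^ (-q) := by
    rcases le_or_gt q 1 with hq1 | hq1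
    · have hb : (1 + (-s)) ^ q ≤ 1 + q * (-s) :=
        rpow_one_add_le_one_add_mul_self (by linarith) hq.le hq1
      have h1 : (1 - s) ^ q ≤ 1 - q * s := by
        calc (1-s)^q = (1 + (-s))^q := by ring_nf
        _ ≤ 1 + q * (-s) := hb
        _ = 1 - q * s := by ring
      have hpos : (0:ℝ) < (1-s)^q := Real.rpow_pos_of_pos h1s q
      rw [Real.rpow_neg h1s.le, ← one_div, le_div_iff₀ hpos]
      nlinarith [mul_le_mul_of_nonneg_left h1 (show (0:ℝ) ≤ 1+q*s by positivity), sq_nonneg (q*s)]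
    · have hb : 1 + q * (s/(1-s)) ≤ (1 + s/(1-s)) ^ q :=
        one_add_mul_self_le_rpow_one_add (by have := div_nonneg hs0.le h1s.le; linarith) hq1.le
      have he : 1 + s/(1-s) = (1-s)⁻¹ := by
        rw [inv_eq_one_div, eq_div_iff h1s.ne', add_mul, div_mul_cancel₀ _ h1s.ne']
        ring
      have hss : s ≤ s/(1-s) := by
        rw [le_div_iff₀ (by linarith)]; nlinarith
      calc 1 + q*s ≤ 1 + q * (s/(1-s)) := by nlinarith
        _ ≤ (1 + s/(1-s)) ^ q := hb
        _ = (1-s) ^ (-q) := by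
            rw [he, ← Real.rpow_neg_one (1-s), ← Real.rpow_mul h1s.le]
            norm_num
  have hfact : x - 1 = x * (1 - s) := by rw [hs, mul_sub, mul_one_div, div_self hxpos.ne', mul_one]
  have hmul : (x-1) ^ (-q) = x ^ (-q) * (1-s) ^ (-q) := by
    rw [hfact, Real.mul_rpow hxpos.le h1s.le]
  have hxq : (0:ℝ) < x ^ (-q) := Real.rpow_pos_of_pos hxpos _
  have h5 : x ^ (-q) * (1 + q * s) ≤ (x-1)^(-q) := by
    rw [hmul]; exact mul_le_mul_of_nonneg_left key hxq.le
  have h6 : x ^ (-q) * s = x ^ (-(q+1)) := by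
    rw [hs, show -(q+1) = -q - 1 by ring, Real.rpow_sub hxpos, Real.rpow_one]; ring
  nlinarith [h5, h6]
-- chunk C : nat sums
lemma NS1 {s : ℝ} (hs0 : 0 ≤ s) (hs1 : s < 1) (N : ℕ) :
    ∑ k ∈ Finset.Icc 1 N, ((k:ℝ)) ^ (-s) ≤ (N:ℝ) ^ (1-s) / (1-s) := by
  have hq : 0 < 1 - s := by linarith
  induction N with
  | zero => simp [Real.zero_rpow hq.ne']
  | succ N ih =>
    rw [Finset.sum_Icc_succ_top (Nat.one_le_iff_ne_zero.mpr (Nat.succ_ne_zero N))]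
    have hx : (1:ℝ) ≤ (N:ℝ) + 1 := by have : (0:ℝ) ≤ (N:ℝ) := Nat.cast_nonneg N; linarith
    have hb := B2 (q := 1 - s) (x := (N:ℝ) + 1) hq (by linarith) hx
    have e1 : ((N+1:ℕ):ℝ) = (N:ℝ) + 1 := by push_cast; ring
    have e2 : (1 - s) - 1 = -s := by ring
    rw [e2] at hb
    have : ((N:ℝ)+1) ^ (-s) ≤ (((N:ℝ)+1) ^ (1-s) - (N:ℝ) ^ (1-s)) / (1-s) := by
      rw [le_div_iff₀ hq]
      have : ((N:ℝ)+1) - 1 = (N:ℝ) := by ring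
      rw [this] at hb; nlinarith
    rw [e1]
    calc (∑ k ∈ Finset.Icc 1 N, ((k:ℝ)) ^ (-s)) + ((N:ℝ)+1) ^ (-s)
        ≤ (N:ℝ)^(1-s)/(1-s) + (((N:ℝ)+1) ^ (1-s) - (N:ℝ) ^ (1-s)) / (1-s) := by
          exact add_le_add ih this
      _ = ((N:ℝ)+1) ^ (1-s) / (1-s) := by field_simp; ring
  
lemma NS2aux {r : ℝ} (hr : 1 < r) {N : ℕ} (hN : 1 ≤ N) (K : ℕ) :
    (∑ k ∈ Finset.Icc (N+1) K, ((k:ℝ)) ^ (-r)) + ((max K N : ℕ):ℝ)^(1-r)/(r-1)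
      ≤ (N:ℝ)^(1-r)/(r-1) := by
  induction K with
  | zero => simp [Nat.max_eq_right (Nat.zero_le N)]
  | succ K ih =>
    rcases le_or_gt (K+1) N with h | h
    · have e : Finset.Icc (N+1) (K+1) = (∅ : Finset ℕ) := Finset.Icc_eq_empty (by omega)
      have e2 : max (K+1) N = N := Nat.max_eq_right (by omega)
      have e3 : Finset.Icc (N+1) K = (∅ : Finset ℕ) := Finset.Icc_eq_empty (by omega)
      have e4 : max K N = N := Nat.max_eq_right (by omega)
      rw [e, e2]; rw [e3, e4] at ih; exact ih
    · have hKN : N ≤ K := by omega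
      rw [Finset.sum_Icc_succ_top (by omega : N+1 ≤ K+1)]
      rw [Nat.max_eq_left hKN] at ih
      rw [Nat.max_eq_left (by omega)]
      have hx : (2:ℝ) ≤ (K:ℝ) + 1 := by
        have : (1:ℝ) ≤ (K:ℝ) := by exact_mod_cast Nat.one_le_iff_ne_zero.mpr (by omega)
        linarith
      have hb := B1 (q := r - 1) (x := (K:ℝ)+1) (by linarith) hx
      have e1 : -(r - 1 + 1) = -r := by ring
      have e2 : -(r-1) = 1 - r := by ring
      have e3 : ((K:ℝ)+1) - 1 = (K:ℝ) := by ring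
      rw [e1, e2, e3] at hb
      have hq : 0 < r - 1 := by linarith
      have e4 : ((K+1:ℕ):ℝ) = (K:ℝ)+1 := by push_cast; ring
      rw [e4]
      have h7 : ((K:ℝ)+1)^(-r) ≤ ((K:ℝ)^(1-r) - ((K:ℝ)+1)^(1-r))/(r-1) := by
        rw [le_div_iff₀ hq]; nlinarith
      have e5 : ((K:ℝ)^(1-r) - ((K:ℝ)+1)^(1-r))/(r-1)
          = (K:ℝ)^(1-r)/(r-1) - ((K:ℝ)+1)^(1-r)/(r-1) := by rw [sub_div]
      have key : ((K:ℝ)+1)^(-r) + ((K:ℝ)+1)^(1-r)/(r-1) ≤ (K:ℝ)^(1-r)/(r-1) := by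
        rw [e5] at h7; linarith
      linarith

lemma NS2 {r : ℝ} (hr : 1 < r) {N : ℕ} (hN : 1 ≤ N) (K : ℕ) :
    ∑ k ∈ Finset.Icc N K, ((k:ℝ)) ^ (-r) ≤ (r/(r-1)) * (N:ℝ)^(1-r) := by
  have hq : 0 < r - 1 := by linarith
  have hNR : (1:ℝ) ≤ (N:ℝ) := by exact_mod_cast hN
  have hNpos : (0:ℝ) < (N:ℝ) := by linarith
  have hmax : (0:ℝ) ≤ ((max K N : ℕ):ℝ)^(1-r)/(r-1) := by positivity
  have h1 : (N:ℝ)^(-r) ≤ (N:ℝ)^(1-r) :=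
    Real.rpow_le_rpow_of_exponent_le hNR (by linarith)
  rcases le_or_gt N K with h | h
  · have : Finset.Icc N K = insert N (Finset.Icc (N+1) K) := by
      ext n; simp only [Finset.mem_Icc, Finset.mem_insert]; omega
    rw [this, Finset.sum_insert (by simp only [Finset.mem_Icc, not_and, not_le]; omega)]
    have h2 := NS2aux hr hN K
    have h3 : ∑ k ∈ Finset.Icc (N+1) K, ((k:ℝ)) ^ (-r) ≤ (N:ℝ)^(1-r)/(r-1) := by linarith
    calc (N:ℝ)^(-r) + ∑ k ∈ Finset.Icc (N+1) K, ((k:ℝ)) ^ (-r)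
        ≤ (N:ℝ)^(1-r) + (N:ℝ)^(1-r)/(r-1) := add_le_add h1 h3
      _ = (r/(r-1)) * (N:ℝ)^(1-r) := by field_simp; ring
  · rw [Finset.Icc_eq_empty (by omega)]
    simp only [Finset.sum_empty]; positivity
-- chunk D : integer sums
lemma sum_Icc_symm (g : ℤ → ℝ) (hsymm : ∀ n : ℤ, g (-n) = g n) (K : ℕ) :
    ∑ n ∈ Finset.Icc (-(K:ℤ)) K, g n = g 0 + 2 * ∑ k ∈ Finset.Icc 1 K, g (k:ℤ) := by
  induction K with
  | zero => simp
  | succ K ih =>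
    have hins : Finset.Icc (-((K+1:ℕ)):ℤ) ((K+1:ℕ)) =
        insert (-((K:ℤ)+1)) (insert ((K:ℤ)+1) (Finset.Icc (-(K:ℤ)) K)) := by
      ext n
      simp only [Finset.mem_Icc, Finset.mem_insert]
      push_cast
      omega
    rw [hins, Finset.sum_insert, Finset.sum_insert, Finset.sum_Icc_succ_top (by omega : 1 ≤ K+1),
      ih, hsymm ((K:ℤ)+1)]
    · push_cast; ring
    · simp only [Finset.mem_Icc]; omega
    · simp only [Finset.mem_insert, Finset.mem_Icc]; omega

lemma one_le_abs_int {n : ℤ} (hn : n ≠ 0) : (1:ℝ) ≤ |(n:ℝ)| := by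
  have : (1:ℤ) ≤ |n| := Int.one_le_abs (by omega)
  calc (1:ℝ) ≤ ((|n| : ℤ) : ℝ) := by exact_mod_cast this
    _ = |(n:ℝ)| := by push_cast; simp

lemma sumJ {r : ℝ} (hr : 1 < r) : Summable (fun n : ℤ => jb (n:ℝ) ^ (-r)) := by
  apply Summable.of_nonneg_of_le (f := fun n : ℤ => (if n = 0 then (1:ℝ) else 0) + |(n:ℝ)| ^ (-r))
  · intro n; exact Real.rpow_nonneg (jb_nonneg _) _
  · intro n
    by_cases hn : n = 0
    · subst hn; simp [jb_zero, Real.one_rpow]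
      positivity
    · have h1 : (1:ℝ) ≤ |(n:ℝ)| := one_le_abs_int hn
      have h2 : |(n:ℝ)| ≤ jb (n:ℝ) := abs_le_jb _
      have := rpow_neg_anti (by linarith : (0:ℝ) < |(n:ℝ)|) h2 (by linarith : (0:ℝ) ≤ r)
      simp [hn]
      linarith
  · exact Summable.add (summable_of_ne_finset_zero (s := {0}) (by intro n hn; simp at hn ⊢; exact hn))
      (Real.summable_abs_int_rpow hr)

lemma half_rpow {x r : ℝ} (hx : 0 < x) : (x/2) ^ (-r) = 2^r * x^(-r) := by
  rw [Real.div_rpow hx.le (by norm_num : (0:ℝ) ≤ 2), Real.rpow_neg (by norm_num : (0:ℝ) ≤ 2)]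
  field_simp

/-- pointwise shift bound : for `|θ| ≤ 1/2`, `jb (x - θ)^(-r) ≤ 2^r * jb x ^ (-r)` -/
lemma jb_shift_rpow {x θ r : ℝ} (hθ : |θ| ≤ 1/2) (hr : 0 ≤ r) :
    jb (x - θ) ^ (-r) ≤ 2^r * jb x ^ (-r) := by
  have h := jb_le_two_mul_jb (x := x) hθ
  have h2 : jb x / 2 ≤ jb (x - θ) := by linarith
  have := rpow_neg_anti (by have := jb_pos x; positivity : (0:ℝ) < jb x / 2) h2 hr
  rwa [half_rpow (jb_pos x)] at this

lemma summable_shiftJ {r : ℝ} (hr : 1 < r) (a : ℝ) :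
    Summable (fun n : ℤ => jb ((n:ℝ) - a) ^ (-r)) := by
  set m := round a
  set θ := a - m with hθdef
  have hθ : |θ| ≤ 1/2 := abs_sub_round a
  rw [← (Equiv.addRight m).summable_iff]
  have : ((fun n : ℤ => jb ((n:ℝ) - a) ^ (-r)) ∘ (Equiv.addRight m))
      = fun k : ℤ => jb ((k:ℝ) - θ) ^ (-r) := by
    funext k
    simp only [Function.comp_apply, Equiv.coe_addRight]
    congr 2
    push_cast
    ring
  rw [this]
  apply Summable.of_nonneg_of_le (f := fun k : ℤ => 2^r * jb (k:ℝ) ^ (-r))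
  · intro n; exact Real.rpow_nonneg (jb_nonneg _) _
  · intro n; exact jb_shift_rpow hθ (by linarith)
  · exact (sumJ hr).mul_left _

lemma tsum_shiftJ_le {r : ℝ} (hr : 1 < r) (a : ℝ) :
    ∑' n : ℤ, jb ((n:ℝ) - a) ^ (-r) ≤ 2^r * ∑' n : ℤ, jb (n:ℝ) ^ (-r) := by
  set m := round a
  set θ := a - m with hθdef
  have hθ : |θ| ≤ 1/2 := abs_sub_round a
  have he : ∑' n : ℤ, jb ((n:ℝ) - a) ^ (-r) = ∑' k : ℤ, jb ((k:ℝ) - θ) ^ (-r) := by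
    rw [← (Equiv.addRight m).tsum_eq (fun n : ℤ => jb ((n:ℝ) - a) ^ (-r))]
    apply tsum_congr
    intro k
    simp only [Equiv.coe_addRight]
    congr 2
    push_cast
    ring
  rw [he, ← tsum_mul_left]
  apply Summable.tsum_le_tsum
  · intro k; exact jb_shift_rpow hθ (by linarith)
  · have := summable_shiftJ hr (θ : ℝ)
    have h2 : (fun n : ℤ => jb ((n:ℝ) - θ) ^ (-r)) = fun n : ℤ => jb ((n:ℝ) - θ) ^ (-r) := rfl
    exact summable_shiftJ hr θ
  · exact (sumJ hr).mul_left _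
-- chunk E : partial and tail sums over ℤ
lemma jb_int_rpow_le {k : ℕ} (hk : 1 ≤ k) {s : ℝ} (hs : 0 ≤ s) :
    jb ((k:ℝ)) ^ (-s) ≤ ((k:ℝ)) ^ (-s) := by
  have hk1 : (1:ℝ) ≤ (k:ℝ) := by exact_mod_cast hk
  have h2 : (k:ℝ) ≤ jb (k:ℝ) := le_trans (le_abs_self _) (abs_le_jb _)
  exact rpow_neg_anti (by linarith) h2 hs

lemma partZ {s : ℝ} (hs0 : 0 ≤ s) (hs1 : s < 1) {M : ℝ} (hM : 1 ≤ M) :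
    ∑' n : ℤ, (if |(n:ℝ)| ≤ M then jb (n:ℝ) ^ (-s) else 0) ≤ (3/(1-s)) * M ^ (1-s) := by
  set P : ℤ → ℝ := fun n => if |(n:ℝ)| ≤ M then jb (n:ℝ) ^ (-s) else 0 with hP
  set N : ℕ := ⌊M⌋₊ with hNdef
  have hN1 : 1 ≤ N := Nat.le_floor (by exact_mod_cast hM)
  have hsupp : ∀ n : ℤ, n ∉ Finset.Icc (-(N:ℤ)) (N:ℤ) → P n = 0 := by
    intro n hn
    rw [hP]
    simp only
    rw [if_neg]
    intro hcon
    apply hn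
    have h1 : ((n.natAbs : ℕ) : ℝ) ≤ M := by
      rw [Nat.cast_natAbs]; exact_mod_cast hcon
    have h2 : n.natAbs ≤ N := Nat.le_floor h1
    simp only [Finset.mem_Icc]
    omega
  rw [tsum_eq_sum (s := Finset.Icc (-(N:ℤ)) (N:ℤ)) hsupp]
  have hsym : ∀ n : ℤ, P (-n) = P n := by
    intro n
    rw [hP]; simp only [Int.cast_neg, abs_neg, jb_neg]
  rw [sum_Icc_symm P hsym N]
  have hP0 : P 0 = 1 := by
    rw [hP]; simp only [Int.cast_zero, abs_zero, jb_zero]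
    rw [if_pos (by linarith), Real.one_rpow]
  have hterm : ∑ k ∈ Finset.Icc 1 N, P (k:ℤ) ≤ ∑ k ∈ Finset.Icc 1 N, ((k:ℝ)) ^ (-s) := by
    apply Finset.sum_le_sum
    intro k hk
    rw [Finset.mem_Icc] at hk
    rw [hP]
    simp only [Int.cast_natCast]
    split_ifs
    · exact jb_int_rpow_le hk.1 hs0
    · positivity
  have hNS := NS1 hs0 hs1 N
  have hNM : (N:ℝ) ≤ M := Nat.floor_le (by linarith)
  have hq : (0:ℝ) < 1 - s := by linarith
  have hNM2 : (N:ℝ)^(1-s) ≤ M^(1-s) := Real.rpow_le_rpow (by positivity) hNM (by linarith)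
  have hM1 : (1:ℝ) ≤ M^(1-s) := Real.one_le_rpow hM (by linarith)
  have : ∑ k ∈ Finset.Icc 1 N, P (k:ℤ) ≤ M^(1-s)/(1-s) := by
    calc ∑ k ∈ Finset.Icc 1 N, P (k:ℤ) ≤ _ := hterm
      _ ≤ (N:ℝ)^(1-s)/(1-s) := hNS
      _ ≤ M^(1-s)/(1-s) := by gcongr
  rw [hP0]
  have hX : (1:ℝ) ≤ M^(1-s)/(1-s) := by
    rw [le_div_iff₀ hq]; nlinarith
  calc 1 + 2 * ∑ k ∈ Finset.Icc 1 N, P (k:ℤ) ≤ 1 + 2 * (M^(1-s)/(1-s)) := by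
        have h2 : (0:ℝ) ≤ 2 := by norm_num
        nlinarith
    _ ≤ 3 * (M^(1-s)/(1-s)) := by linarith
    _ = (3/(1-s)) * M^(1-s) := by ring

lemma tailZ {r : ℝ} (hr : 1 < r) {T : ℝ} (hT : 1 ≤ T) :
    ∑' n : ℤ, (if T ≤ |(n:ℝ)| then jb (n:ℝ) ^ (-r) else 0) ≤ (2*r/(r-1)) * T ^ (1-r) := by
  set P : ℤ → ℝ := fun n => if T ≤ |(n:ℝ)| then jb (n:ℝ) ^ (-r) else 0 with hP
  have hPnn : ∀ n, 0 ≤ P n := by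
    intro n; rw [hP]; simp only; split_ifs
    · exact Real.rpow_nonneg (jb_nonneg _) _
    · exact le_refl 0
  have hPsum : Summable P := by
    apply Summable.of_nonneg_of_le (f := fun n : ℤ => jb (n:ℝ) ^ (-r)) hPnn
    · intro n; rw [hP]; simp only; split_ifs
      · exact le_refl _
      · exact Real.rpow_nonneg (jb_nonneg _) _
    · exact sumJ hr
  apply Summable.tsum_le_of_sum_le hPsum
  intro F
  set K : ℕ := F.sup (fun n => n.natAbs) with hK
  have hsub : F ⊆ Finset.Icc (-(K:ℤ)) (K:ℤ) := by
    intro n hn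
    have h2 := Finset.le_sup (f := fun n : ℤ => n.natAbs) hn
    simp only [Finset.mem_Icc]
    have h3 : (n.natAbs : ℤ) ≤ (K:ℤ) := by exact_mod_cast h2
    omega
  have h1 : ∑ n ∈ F, P n ≤ ∑ n ∈ Finset.Icc (-(K:ℤ)) (K:ℤ), P n :=
    Finset.sum_le_sum_of_subset_of_nonneg hsub (fun n _ _ => hPnn n)
  have hsym : ∀ n : ℤ, P (-n) = P n := by
    intro n; rw [hP]; simp only [Int.cast_neg, abs_neg, jb_neg]
  rw [sum_Icc_symm P hsym K] at h1
  have hP0 : P 0 = 0 := by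
    rw [hP]; simp only [Int.cast_zero, abs_zero, jb_zero]
    rw [if_neg (by linarith)]
  set N0 : ℕ := ⌈T⌉₊ with hN0
  have hN01 : 1 ≤ N0 := Nat.one_le_ceil_iff.mpr (by linarith)
  have hterm : ∑ k ∈ Finset.Icc 1 K, P (k:ℤ) ≤ ∑ k ∈ Finset.Icc N0 K, ((k:ℝ)) ^ (-r) := by
    have step1 : ∑ k ∈ Finset.Icc 1 K, P (k:ℤ)
        ≤ ∑ k ∈ Finset.Icc 1 K, (if T ≤ (k:ℝ) then ((k:ℝ)) ^ (-r) else 0) := by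
      apply Finset.sum_le_sum
      intro k hk
      rw [Finset.mem_Icc] at hk
      rw [hP]
      simp only [Int.cast_natCast]
      have habs : |((k:ℕ):ℝ)| = ((k:ℕ):ℝ) := abs_of_nonneg (Nat.cast_nonneg k)
      rw [habs]
      split_ifs
      · exact jb_int_rpow_le hk.1 (by linarith)
      · exact le_refl 0
    have e : (∑ k ∈ Finset.Icc 1 K, (if T ≤ (k:ℝ) then ((k:ℝ)) ^ (-r) else 0))
        = ∑ k ∈ (Finset.Icc 1 K).filter (fun k : ℕ => T ≤ ((k:ℕ):ℝ)), ((k:ℝ)) ^ (-r) :=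
      (Finset.sum_filter _ _).symm
    rw [e] at step1
    refine le_trans step1 (Finset.sum_le_sum_of_subset_of_nonneg ?_ ?_)
    · intro k hk
      simp only [Finset.mem_filter, Finset.mem_Icc] at hk ⊢
      exact ⟨Nat.ceil_le.mpr hk.2, hk.1.2⟩
    · intro k _ _; positivity
  have hNS := NS2 hr hN01 K
  have hTN0 : T ≤ (N0:ℝ) := Nat.le_ceil T
  have hTpos : (0:ℝ) < T := by linarith
  have hmono : ((N0:ℝ)) ^ (1-r) ≤ T ^ (1-r) := by
    rw [show (1:ℝ) - r = -(r-1) by ring]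
    exact rpow_neg_anti hTpos hTN0 (by linarith)
  have hq : (0:ℝ) < r - 1 := by linarith
  calc ∑ n ∈ F, P n ≤ P 0 + 2 * ∑ k ∈ Finset.Icc 1 K, P (k:ℤ) := h1
    _ ≤ 0 + 2 * ((r/(r-1)) * T^(1-r)) := by
        rw [hP0]
        have := le_trans hterm (le_trans hNS (by
          have : (r/(r-1)) * ((N0:ℝ))^(1-r) ≤ (r/(r-1)) * T^(1-r) := by
            apply mul_le_mul_of_nonneg_left hmono (by positivity)
          exact this))
        linarith
    _ = (2*r/(r-1)) * T^(1-r) := by ring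
-- chunk F : shifted partial and tail sums
lemma partZshift {s : ℝ} (hs0 : 0 ≤ s) (hs1 : s < 1) {M : ℝ} (hM : 1 ≤ M) (a : ℝ) :
    ∑' n : ℤ, (if |(n:ℝ) - a| ≤ M then jb ((n:ℝ) - a) ^ (-s) else 0)
      ≤ (12/(1-s)) * M ^ (1-s) := by
  set m := round a
  set θ := a - m with hθdef
  have hθ : |θ| ≤ 1/2 := abs_sub_round a
  set G : ℝ → ℝ := fun t => if |t| ≤ M then jb t ^ (-s) else 0 with hG
  have hGnn : ∀ t, 0 ≤ G t := by
    intro t; rw [hG]; simp only; split_ifs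
    · exact Real.rpow_nonneg (jb_nonneg _) _
    · exact le_refl 0
  have he : ∑' n : ℤ, G ((n:ℝ) - a) = ∑' k : ℤ, G ((k:ℝ) - θ) := by
    rw [← (Equiv.addRight m).tsum_eq (fun n : ℤ => G ((n:ℝ) - a))]
    apply tsum_congr
    intro k
    simp only [Equiv.coe_addRight]
    congr 1
    push_cast
    ring
  set H : ℤ → ℝ := fun k => 2^s * (if |(k:ℝ)| ≤ M + 1/2 then jb (k:ℝ) ^ (-s) else 0) with hH
  have hHnn : ∀ k, 0 ≤ H k := by
    intro k; rw [hH]; simp only; split_ifs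
    · exact mul_nonneg (by positivity) (Real.rpow_nonneg (jb_nonneg _) _)
    · simp
  have hpt : ∀ k : ℤ, G ((k:ℝ) - θ) ≤ H k := by
    intro k
    rw [hG, hH]
    simp only
    split_ifs with h1 h2
    · exact jb_shift_rpow hθ hs0
    · exfalso
      apply h2
      have : |(k:ℝ)| ≤ |(k:ℝ) - θ| + |θ| := by
        calc |(k:ℝ)| = |((k:ℝ) - θ) + θ| := by ring_nf
          _ ≤ |(k:ℝ) - θ| + |θ| := abs_add_le _ _
      linarith
    · exact mul_nonneg (by positivity) (Real.rpow_nonneg (jb_nonneg _) _)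
    · simp
  -- summability
  have hsumH : Summable H := by
    apply Summable.mul_left
    apply summable_of_ne_finset_zero (s := Finset.Icc (-((⌊M+1⌋₊:ℕ):ℤ)) ((⌊M+1⌋₊:ℕ):ℤ))
    intro k hk
    rw [if_neg]
    intro hcon
    apply hk
    have h1 : ((k.natAbs : ℕ) : ℝ) ≤ M + 1 := by
      rw [Nat.cast_natAbs]; push_cast; linarith
    have h2 : k.natAbs ≤ ⌊M+1⌋₊ := Nat.le_floor h1
    simp only [Finset.mem_Icc]
    omega
  have hsumG : Summable (fun k : ℤ => G ((k:ℝ) - θ)) := by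
    apply Summable.of_nonneg_of_le (f := H) (fun k => hGnn _) hpt hsumH
  have hbound : ∑' k : ℤ, G ((k:ℝ) - θ) ≤ ∑' k : ℤ, H k := Summable.tsum_le_tsum hpt hsumG hsumH
  have hH2 : ∑' k : ℤ, H k = 2^s * ∑' k : ℤ, (if |(k:ℝ)| ≤ M + 1/2 then jb (k:ℝ) ^ (-s) else 0) := by
    rw [hH]; exact tsum_mul_left
  have hpart := partZ hs0 hs1 (M := M + 1/2) (by linarith)
  have h2s : (2:ℝ)^s ≤ 2 := by
    calc (2:ℝ)^s ≤ 2^(1:ℝ) := Real.rpow_le_rpow_of_exponent_le one_le_two hs1.le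
      _ = 2 := Real.rpow_one 2
  have hq : (0:ℝ) < 1 - s := by linarith
  have hMq : (M + 1/2) ^ (1-s) ≤ 2 * M^(1-s) := by
    calc (M + 1/2) ^ (1-s) ≤ (2*M) ^ (1-s) :=
          Real.rpow_le_rpow (by linarith) (by linarith) (by linarith)
      _ = 2^(1-s) * M^(1-s) := Real.mul_rpow (by norm_num) (by linarith)
      _ ≤ 2 * M^(1-s) := by
          have h1 : (2:ℝ)^(1-s) ≤ 2^(1:ℝ) := Real.rpow_le_rpow_of_exponent_le one_le_two (by linarith)
          have h2 : (0:ℝ) ≤ M^(1-s) := by positivity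
          rw [Real.rpow_one] at h1
          nlinarith
  have hpos : (0:ℝ) ≤ ∑' k : ℤ, (if |(k:ℝ)| ≤ M + 1/2 then jb (k:ℝ) ^ (-s) else 0) := by
    apply tsum_nonneg
    intro k; split_ifs
    · exact Real.rpow_nonneg (jb_nonneg _) _
    · exact le_refl 0
  calc ∑' n : ℤ, G ((n:ℝ) - a) = ∑' k : ℤ, G ((k:ℝ) - θ) := he
    _ ≤ ∑' k : ℤ, H k := hbound
    _ = 2^s * ∑' k : ℤ, (if |(k:ℝ)| ≤ M + 1/2 then jb (k:ℝ) ^ (-s) else 0) := hH2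
    _ ≤ 2 * ((3/(1-s)) * (M + 1/2)^(1-s)) := by
        apply mul_le_mul h2s hpart hpos (by norm_num)
    _ ≤ 2 * ((3/(1-s)) * (2 * M^(1-s))) := by
        have h3 : (0:ℝ) ≤ 3/(1-s) := by positivity
        nlinarith
    _ = (12/(1-s)) * M^(1-s) := by ring

lemma tailZshift {r : ℝ} (hr : 1 < r) {T : ℝ} (hT : 1 ≤ T) (a : ℝ) :
    ∑' n : ℤ, (if T ≤ |(n:ℝ) - a| then jb ((n:ℝ) - a) ^ (-r) else 0)
      ≤ (2^r * (2*r/(r-1)) * 2^(r-1)) * T ^ (1-r) := by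
  set m := round a
  set θ := a - m with hθdef
  have hθ : |θ| ≤ 1/2 := abs_sub_round a
  set G : ℝ → ℝ := fun t => if T ≤ |t| then jb t ^ (-r) else 0 with hG
  have hGnn : ∀ t, 0 ≤ G t := by
    intro t; rw [hG]; simp only; split_ifs
    · exact Real.rpow_nonneg (jb_nonneg _) _
    · exact le_refl 0
  have he : ∑' n : ℤ, G ((n:ℝ) - a) = ∑' k : ℤ, G ((k:ℝ) - θ) := by
    rw [← (Equiv.addRight m).tsum_eq (fun n : ℤ => G ((n:ℝ) - a))]
    apply tsum_congr
    intro k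
    simp only [Equiv.coe_addRight]
    congr 1
    push_cast
    ring
  set T2 : ℝ := max 1 (T - 1/2) with hT2
  have hT21 : 1 ≤ T2 := le_max_left _ _
  set H : ℤ → ℝ := fun k => 2^r * (if T2 ≤ |(k:ℝ)| then jb (k:ℝ) ^ (-r) else 0) with hH
  have hpt : ∀ k : ℤ, G ((k:ℝ) - θ) ≤ H k := by
    intro k
    rw [hG, hH]
    simp only
    split_ifs with h1 h2
    · exact jb_shift_rpow hθ (by linarith)
    · exfalso
      apply h2
      have htri : |(k:ℝ) - θ| ≤ |(k:ℝ)| + |θ| := by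
        calc |(k:ℝ) - θ| ≤ |(k:ℝ)| + |(-θ)| := by rw [sub_eq_add_neg]; exact abs_add_le _ _
          _ = |(k:ℝ)| + |θ| := by rw [abs_neg]
      have hk1 : T - 1/2 ≤ |(k:ℝ)| := by linarith
      have hk0 : k ≠ 0 := by
        intro hk
        subst hk
        norm_num at hk1
        linarith
      exact max_le (one_le_abs_int hk0) hk1
    · exact mul_nonneg (by positivity) (Real.rpow_nonneg (jb_nonneg _) _)
    · simp
  have hsumH : Summable H := by
    apply Summable.mul_left
    apply Summable.of_nonneg_of_le (f := fun n : ℤ => jb (n:ℝ) ^ (-r))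
    · intro k; split_ifs
      · exact Real.rpow_nonneg (jb_nonneg _) _
      · exact le_refl 0
    · intro k; split_ifs
      · exact le_refl _
      · exact Real.rpow_nonneg (jb_nonneg _) _
    · exact sumJ hr
  have hsumG : Summable (fun k : ℤ => G ((k:ℝ) - θ)) :=
    Summable.of_nonneg_of_le (f := H) (fun k => hGnn _) hpt hsumH
  have htail := tailZ hr hT21
  have hT2T : T ≤ 2 * T2 := by
    rcases le_or_gt T 2 with h | h
    · calc T ≤ 2 := h
        _ ≤ 2 * T2 := by nlinarith
    · calc T ≤ 2 * (T - 1/2) := by linarith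
        _ ≤ 2 * T2 := by have := le_max_right (1:ℝ) (T - 1/2); linarith
  have hmono : T2 ^ (1-r) ≤ 2^(r-1) * T ^ (1-r) := by
    have h1 : T/2 ≤ T2 := by linarith
    have h2 : (0:ℝ) < T/2 := by linarith
    have h3 := rpow_neg_anti h2 h1 (by linarith : (0:ℝ) ≤ r - 1)
    rw [half_rpow (by linarith : (0:ℝ) < T)] at h3
    rw [show (1:ℝ) - r = -(r-1) by ring]
    exact h3
  have hq : (0:ℝ) < 2*r/(r-1) := by
    apply div_pos (by linarith) (by linarith)
  calc ∑' n : ℤ, G ((n:ℝ) - a) = ∑' k : ℤ, G ((k:ℝ) - θ) := he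
    _ ≤ ∑' k : ℤ, H k := Summable.tsum_le_tsum hpt hsumG hsumH
    _ = 2^r * ∑' k : ℤ, (if T2 ≤ |(k:ℝ)| then jb (k:ℝ) ^ (-r) else 0) := by
        rw [hH]; exact tsum_mul_left
    _ ≤ 2^r * ((2*r/(r-1)) * T2^(1-r)) := by
        apply mul_le_mul_of_nonneg_left htail (by positivity)
    _ ≤ 2^r * ((2*r/(r-1)) * (2^(r-1) * T^(1-r))) := by
        have h6 : (2*r/(r-1)) * T2^(1-r) ≤ (2*r/(r-1)) * (2^(r-1) * T^(1-r)) :=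
          mul_le_mul_of_nonneg_left hmono hq.le
        exact mul_le_mul_of_nonneg_left h6 (by positivity)
    _ = (2^r * (2*r/(r-1)) * 2^(r-1)) * T^(1-r) := by ring
-- chunk G : pointwise split and generic summabilities
lemma jb_le_one_add_abs (x : ℝ) : jb x ≤ 1 + |x| := by
  rw [jb]
  have h : (1:ℝ) + x^2 ≤ (1+|x|)^2 := by nlinarith [sq_abs x, abs_nonneg x]
  calc Real.sqrt (1+x^2) ≤ Real.sqrt ((1+|x|)^2) := Real.sqrt_le_sqrt h
    _ = 1 + |x| := Real.sqrt_sq (by positivity)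

lemma div_rpow_neg {x c r : ℝ} (hx : 0 < x) (hc : 0 < c) : (x/c) ^ (-r) = c^r * x^(-r) := by
  rw [Real.div_rpow hx.le hc.le, Real.rpow_neg hc.le]
  field_simp

lemma max_split {X Y p q : ℝ} (hX : 1 ≤ X) (hY : 1 ≤ Y) (hp : 0 ≤ p) (hq : 0 ≤ q) :
    X^(-p) * Y^(-q) ≤ X^(-(p+q)) + Y^(-(p+q)) := by
  have hX0 : (0:ℝ) < X := by linarith
  have hY0 : (0:ℝ) < Y := by linarith
  rcases le_total X Y with h | h
  · have h1 : Y^(-q) ≤ X^(-q) := rpow_neg_anti hX0 h hq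
    have h2 : X^(-p) * Y^(-q) ≤ X^(-p) * X^(-q) :=
      mul_le_mul_of_nonneg_left h1 (Real.rpow_nonneg hX0.le _)
    have h3 : X^(-p) * X^(-q) = X^(-(p+q)) := by
      rw [← Real.rpow_add hX0]; congr 1; ring
    have h4 : (0:ℝ) ≤ Y^(-(p+q)) := Real.rpow_nonneg hY0.le _
    linarith
  · have h1 : X^(-p) ≤ Y^(-p) := rpow_neg_anti hY0 h hp
    have h2 : X^(-p) * Y^(-q) ≤ Y^(-p) * Y^(-q) :=
      mul_le_mul_of_nonneg_right h1 (Real.rpow_nonneg hY0.le _)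
    have h3 : Y^(-p) * Y^(-q) = Y^(-(p+q)) := by
      rw [← Real.rpow_add hY0]; congr 1; ring
    have h4 : (0:ℝ) ≤ X^(-(p+q)) := Real.rpow_nonneg hX0.le _
    linarith

lemma ms_pt (α β : ℝ) (hα : 0 ≤ α) (hβ : 0 ≤ β) (a : ℝ) (n : ℤ) :
    jb (n:ℝ)^(-α) * jb ((n:ℝ)-a)^(-β)
      ≤ jb (n:ℝ)^(-(α+β)) + jb ((n:ℝ)-a)^(-(α+β)) :=
  max_split (one_le_jb _) (one_le_jb _) hα hβ

lemma summable_f {α β : ℝ} (hα : 0 ≤ α) (hβ : 0 ≤ β) (hr : 1 < α + β) (a : ℝ) :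
    Summable (fun n : ℤ => jb (n:ℝ)^(-α) * jb ((n:ℝ)-a)^(-β)) := by
  apply Summable.of_nonneg_of_le
    (f := fun n : ℤ => jb (n:ℝ)^(-(α+β)) + jb ((n:ℝ)-a)^(-(α+β)))
  · intro n
    exact mul_nonneg (Real.rpow_nonneg (jb_nonneg _) _) (Real.rpow_nonneg (jb_nonneg _) _)
  · intro n; exact ms_pt α β hα hβ a n
  · exact (sumJ hr).add (summable_shiftJ hr a)

lemma tsum_f_unif {α β : ℝ} (hα : 0 ≤ α) (hβ : 0 ≤ β) (hr : 1 < α + β) (a : ℝ) :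
    ∑' n : ℤ, jb (n:ℝ)^(-α) * jb ((n:ℝ)-a)^(-β)
      ≤ (1 + 2^(α+β)) * ∑' n : ℤ, jb (n:ℝ)^(-(α+β)) := by
  have h1 : ∑' n : ℤ, jb (n:ℝ)^(-α) * jb ((n:ℝ)-a)^(-β)
      ≤ ∑' n : ℤ, (jb (n:ℝ)^(-(α+β)) + jb ((n:ℝ)-a)^(-(α+β))) :=
    Summable.tsum_le_tsum (ms_pt α β hα hβ a) (summable_f hα hβ hr a)
      ((sumJ hr).add (summable_shiftJ hr a))
  rw [Summable.tsum_add (sumJ hr) (summable_shiftJ hr a)] at h1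
  have h2 := tsum_shiftJ_le hr a
  have hS : (0:ℝ) ≤ ∑' n : ℤ, jb (n:ℝ)^(-(α+β)) :=
    tsum_nonneg (fun n => Real.rpow_nonneg (jb_nonneg _) _)
  calc ∑' n : ℤ, jb (n:ℝ)^(-α) * jb ((n:ℝ)-a)^(-β)
      ≤ (∑' n : ℤ, jb (n:ℝ)^(-(α+β))) + ∑' n : ℤ, jb ((n:ℝ)-a)^(-(α+β)) := h1
    _ ≤ (∑' n : ℤ, jb (n:ℝ)^(-(α+β))) + 2^(α+β) * ∑' n : ℤ, jb (n:ℝ)^(-(α+β)) := by linarith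
    _ = (1 + 2^(α+β)) * ∑' n : ℤ, jb (n:ℝ)^(-(α+β)) := by ring

lemma summable_ind_part (s M : ℝ) :
    Summable (fun n : ℤ => if |(n:ℝ)| ≤ M then jb (n:ℝ)^(-s) else 0) := by
  apply summable_of_ne_finset_zero (s := Finset.Icc (-((⌊M⌋₊:ℕ):ℤ)) ((⌊M⌋₊:ℕ):ℤ))
  intro k hk
  rw [if_neg]
  intro hcon
  apply hk
  have h1 : ((k.natAbs : ℕ) : ℝ) ≤ M := by
    rw [Nat.cast_natAbs]; push_cast; linarith
  have h2 : k.natAbs ≤ ⌊M⌋₊ := Nat.le_floor h1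
  simp only [Finset.mem_Icc]
  omega

lemma summable_ind_shift (s M a : ℝ) :
    Summable (fun n : ℤ => if |(n:ℝ) - a| ≤ M then jb ((n:ℝ)-a)^(-s) else 0) := by
  apply summable_of_ne_finset_zero (s := Finset.Icc (-((⌊M + |a|⌋₊:ℕ):ℤ)) ((⌊M + |a|⌋₊:ℕ):ℤ))
  intro k hk
  rw [if_neg]
  intro hcon
  apply hk
  have htri : |(k:ℝ)| ≤ |(k:ℝ) - a| + |a| := by
    calc |(k:ℝ)| = |((k:ℝ) - a) + a| := by ring_nf
      _ ≤ |(k:ℝ) - a| + |a| := abs_add_le _ _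
  have h1 : ((k.natAbs : ℕ) : ℝ) ≤ M + |a| := by
    rw [Nat.cast_natAbs]; push_cast; linarith
  have h2 : k.natAbs ≤ ⌊M + |a|⌋₊ := Nat.le_floor h1
  simp only [Finset.mem_Icc]
  omega
set_option maxHeartbeats 1000000 in
-- chunk H : core lemma for α < 1
lemma core_lt {α β : ℝ} (hα0 : 0 ≤ α) (hα1 : α < 1) (hβ0 : 0 ≤ β) (hβ1 : β < 1)
    (hr : 1 < α + β) :
    ∃ C : ℝ, 0 < C ∧ ∀ a : ℝ,
      ∑' n : ℤ, jb (n:ℝ)^(-α) * jb ((n:ℝ)-a)^(-β) ≤ C * jb a ^ (1 - (α+β)) := by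
  have hrpos : (0:ℝ) < (α+β) - 1 := by linarith
  set r : ℝ := α + β with hrdef
  set S : ℝ := ∑' n : ℤ, jb (n:ℝ)^(-r) with hSdef
  have hSnn : 0 ≤ S := tsum_nonneg (fun n => Real.rpow_nonneg (jb_nonneg _) _)
  set U : ℝ := (1 + 2^r) * S with hUdef
  have hUnn : 0 ≤ U := mul_nonneg (by positivity) hSnn
  set Ct : ℝ := 2^r * (2*r/(r-1)) * 2^(r-1) with hCtdef
  have hCtnn : 0 ≤ Ct := by
    apply mul_nonneg (mul_nonneg (by positivity) _) (by positivity)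
    positivity
  set c0 : ℝ := U * 3^(r-1) with hc0def
  set c1 : ℝ := 2^β * (3/(1-α)) with hc1def
  set c2 : ℝ := 2^α * (12/(1-β)) with hc2def
  set c3 : ℝ := (2*r/(r-1)) * 3^(r-1) with hc3def
  set c4 : ℝ := Ct * 3^(r-1) with hc4def
  have hc0 : 0 ≤ c0 := mul_nonneg hUnn (by positivity)
  have hc1 : 0 ≤ c1 := by
    apply mul_nonneg (by positivity)
    have : (0:ℝ) < 1 - α := by linarith
    positivity
  have hc2 : 0 ≤ c2 := by
    apply mul_nonneg (by positivity)
    have : (0:ℝ) < 1 - β := by linarith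
    positivity
  have hc3 : 0 ≤ c3 := by
    apply mul_nonneg _ (by positivity)
    positivity
  have hc4 : 0 ≤ c4 := mul_nonneg hCtnn (by positivity)
  refine ⟨c0+c1+c2+c3+c4+1, by linarith, ?_⟩
  intro a
  set A : ℝ := jb a with hAdef
  have hA0 : (0:ℝ) < A := jb_pos a
  have hA1 : (1:ℝ) ≤ A := one_le_jb a
  have hApow : (0:ℝ) < A ^ (1-r) := Real.rpow_pos_of_pos hA0 _
  rcases le_or_gt |a| 2 with hs | hs
  · -- small a : uniform bound
    have h := tsum_f_unif hα0 hβ0 hr a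
    have hA3 : A ≤ 3 := le_trans (jb_le_one_add_abs a) (by linarith)
    have h31 : (1:ℝ) ≤ 3^(r-1) * A^(1-r) := by
      have hm : A^(r-1) ≤ 3^(r-1) :=
        Real.rpow_le_rpow hA0.le hA3 (by linarith)
      have hApos : (0:ℝ) < A^(r-1) := Real.rpow_pos_of_pos hA0 _
      have hinv : A^(1-r) = (A^(r-1))⁻¹ := by
        rw [show (1:ℝ)-r = -(r-1) by ring, Real.rpow_neg hA0.le]
      rw [hinv, ← div_eq_mul_inv, le_div_iff₀ hApos, one_mul]
      exact hm
    calc ∑' n : ℤ, jb (n:ℝ)^(-α) * jb ((n:ℝ)-a)^(-β) ≤ U := h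
      _ ≤ U * (3^(r-1) * A^(1-r)) := le_mul_of_one_le_right hUnn h31
      _ = c0 * A^(1-r) := by rw [hc0def]; ring
      _ ≤ (c0+c1+c2+c3+c4+1) * A^(1-r) :=
          mul_le_mul_of_nonneg_right (by linarith) hApow.le
  · -- large a
    set M : ℝ := |a|/2 with hMdef
    have hM1 : (1:ℝ) ≤ M := by rw [hMdef]; linarith
    have hMA : M ≤ A := le_trans (by rw [hMdef]; have := abs_nonneg a; linarith) (abs_le_jb a)
    have hA3M : A ≤ 3*M := by
      have h6 := jb_le_one_add_abs a
      have h7 : 1 + |a| ≤ 3*M := by rw [hMdef]; linarith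
      linarith
    set K1 : ℝ := 2^β * A^(-β) with hK1def
    set K2 : ℝ := 2^α * A^(-α) with hK2def
    have hK1nn : 0 ≤ K1 := mul_nonneg (by positivity) (Real.rpow_nonneg hA0.le _)
    have hK2nn : 0 ≤ K2 := mul_nonneg (by positivity) (Real.rpow_nonneg hA0.le _)
    set P1 : ℤ → ℝ := fun n => if |(n:ℝ)| ≤ M then jb (n:ℝ)^(-α) else 0 with hP1def
    set P2 : ℤ → ℝ := fun n => if |(n:ℝ) - a| ≤ M then jb ((n:ℝ)-a)^(-β) else 0 with hP2def
    set P3 : ℤ → ℝ := fun n => if M ≤ |(n:ℝ)| then jb (n:ℝ)^(-r) else 0 with hP3def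
    set P4 : ℤ → ℝ := fun n => if M ≤ |(n:ℝ) - a| then jb ((n:ℝ)-a)^(-r) else 0 with hP4def
    have hP1nn : ∀ n, 0 ≤ P1 n := by
      intro n; rw [hP1def]; simp only; split_ifs
      · exact Real.rpow_nonneg (jb_nonneg _) _
      · exact le_refl 0
    have hP2nn : ∀ n, 0 ≤ P2 n := by
      intro n; rw [hP2def]; simp only; split_ifs
      · exact Real.rpow_nonneg (jb_nonneg _) _
      · exact le_refl 0
    have hP3nn : ∀ n, 0 ≤ P3 n := by
      intro n; rw [hP3def]; simp only; split_ifs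
      · exact Real.rpow_nonneg (jb_nonneg _) _
      · exact le_refl 0
    have hP4nn : ∀ n, 0 ≤ P4 n := by
      intro n; rw [hP4def]; simp only; split_ifs
      · exact Real.rpow_nonneg (jb_nonneg _) _
      · exact le_refl 0
    -- pointwise bound
    have hpt : ∀ n : ℤ, jb (n:ℝ)^(-α) * jb ((n:ℝ)-a)^(-β)
        ≤ K1 * P1 n + (K2 * P2 n + (P3 n + P4 n)) := by
      intro n
      set x : ℝ := (n:ℝ) with hxdef
      have htri1 : |a| ≤ |x - a| + |x| := by
        calc |a| = |x - (x - a)| := by ring_nf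
          _ ≤ |x| + |x - a| := abs_sub _ _
          _ = |x - a| + |x| := by ring
      by_cases h1 : |x| ≤ M
      · have hd : M ≤ |x - a| := by
          have : |a| = 2*M := by rw [hMdef]; ring
          linarith
        have hjb : A/2 ≤ jb (x - a) := by
          have := jb_half (x := x - a) (a := a) (by linarith [hd, (show |a| = 2*M by rw [hMdef]; ring)])
          linarith
        have hb : jb (x-a)^(-β) ≤ K1 := by
          have h2 := rpow_neg_anti (by positivity : (0:ℝ) < A/2) hjb hβ0
          rwa [div_rpow_neg hA0 (by norm_num : (0:ℝ) < 2)] at h2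
        have hmul : jb x^(-α) * jb (x-a)^(-β) ≤ jb x^(-α) * K1 :=
          mul_le_mul_of_nonneg_left hb (Real.rpow_nonneg (jb_nonneg _) _)
        have hP1v : P1 n = jb x^(-α) := by rw [hP1def]; simp only; rw [if_pos h1]
        have : K1 * P1 n = jb x^(-α) * K1 := by rw [hP1v]; ring
        have h2 := mul_nonneg hK2nn (hP2nn n)
        have h3 := hP3nn n
        have h4 := hP4nn n
        linarith
      · by_cases h2 : |x - a| ≤ M
        · have hd : M ≤ |x| := by
            have : |a| = 2*M := by rw [hMdef]; ring
            linarith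
          have hjb : A/2 ≤ jb x := by
            have := jb_half (x := x) (a := a) (by linarith [(show |a| = 2*M by rw [hMdef]; ring)])
            linarith
          have hb : jb x^(-α) ≤ K2 := by
            have h3 := rpow_neg_anti (by positivity : (0:ℝ) < A/2) hjb hα0
            rwa [div_rpow_neg hA0 (by norm_num : (0:ℝ) < 2)] at h3
          have hmul : jb x^(-α) * jb (x-a)^(-β) ≤ K2 * jb (x-a)^(-β) :=
            mul_le_mul_of_nonneg_right hb (Real.rpow_nonneg (jb_nonneg _) _)
          have hP2v : P2 n = jb (x-a)^(-β) := by rw [hP2def]; simp only; rw [if_pos h2]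
          have h1' := mul_nonneg hK1nn (hP1nn n)
          have h3 := hP3nn n
          have h4 := hP4nn n
          rw [hP2v] at *
          linarith
        · have h3 : M ≤ |x| := (not_le.mp h1).le
          have h4 : M ≤ |x - a| := (not_le.mp h2).le
          have hms := ms_pt α β hα0 hβ0 a n
          have hP3v : P3 n = jb x^(-r) := by rw [hP3def]; simp only; rw [if_pos h3]
          have hP4v : P4 n = jb (x-a)^(-r) := by rw [hP4def]; simp only; rw [if_pos h4]
          have h1' := mul_nonneg hK1nn (hP1nn n)
          have h2' := mul_nonneg hK2nn (hP2nn n)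
          rw [hP3v, hP4v]
          rw [hrdef]
          linarith
    -- summabilities
    have hsf := summable_f hα0 hβ0 hr a
    have hs1 : Summable (fun n => K1 * P1 n) := (summable_ind_part α M).mul_left K1
    have hs2 : Summable (fun n => K2 * P2 n) := (summable_ind_shift β M a).mul_left K2
    have hs3 : Summable P3 := by
      apply Summable.of_nonneg_of_le (f := fun n : ℤ => jb (n:ℝ)^(-r)) hP3nn
      · intro n; rw [hP3def]; simp only; split_ifs
        · exact le_refl _
        · exact Real.rpow_nonneg (jb_nonneg _) _
      · exact sumJ hr
    have hs4 : Summable P4 := by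
      apply Summable.of_nonneg_of_le (f := fun n : ℤ => jb ((n:ℝ)-a)^(-r)) hP4nn
      · intro n; rw [hP4def]; simp only; split_ifs
        · exact le_refl _
        · exact Real.rpow_nonneg (jb_nonneg _) _
      · exact summable_shiftJ hr a
    have htot : ∑' n : ℤ, jb (n:ℝ)^(-α) * jb ((n:ℝ)-a)^(-β)
        ≤ ∑' n : ℤ, (K1 * P1 n + (K2 * P2 n + (P3 n + P4 n))) :=
      Summable.tsum_le_tsum hpt hsf (hs1.add (hs2.add (hs3.add hs4)))
    rw [Summable.tsum_add hs1 (hs2.add (hs3.add hs4)), Summable.tsum_add hs2 (hs3.add hs4),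
      Summable.tsum_add hs3 hs4, tsum_mul_left, tsum_mul_left] at htot
    -- bounds on pieces
    have hb1 := partZ hα0 hα1 hM1
    have hb2 := partZshift hβ0 hβ1 hM1 a
    have hb3 := tailZ hr hM1
    have hb4 := tailZshift hr hM1 a
    -- exponent conversions
    have hMA1 : M^(1-α) ≤ A^(1-α) := Real.rpow_le_rpow (by linarith) hMA (by linarith)
    have hMA2 : M^(1-β) ≤ A^(1-β) := Real.rpow_le_rpow (by linarith) hMA (by linarith)
    have hMA3 : M^(1-r) ≤ 3^(r-1) * A^(1-r) := by
      have hd : A/3 ≤ M := by linarith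
      have h5 := rpow_neg_anti (by positivity : (0:ℝ) < A/3) hd (by linarith : (0:ℝ) ≤ r-1)
      rw [div_rpow_neg hA0 (by norm_num : (0:ℝ) < 3)] at h5
      calc M^(1-r) = M^(-(r-1)) := by rw [show (1:ℝ)-r = -(r-1) by ring]
        _ ≤ 3^(r-1) * A^(-(r-1)) := h5
        _ = 3^(r-1) * A^(1-r) := by rw [show -(r-(1:ℝ)) = 1-r by ring]
    have hcomb1 : A^(-β) * A^(1-α) = A^(1-r) := by
      rw [← Real.rpow_add hA0]; congr 1; rw [hrdef]; ring
    have hcomb2 : A^(-α) * A^(1-β) = A^(1-r) := by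
      rw [← Real.rpow_add hA0]; congr 1; rw [hrdef]; ring
    -- piece 1
    have hT1nn : (0:ℝ) ≤ ∑' n, P1 n := tsum_nonneg hP1nn
    have ht1 : K1 * ∑' n, P1 n ≤ c1 * A^(1-r) := by
      calc K1 * ∑' n, P1 n ≤ K1 * ((3/(1-α)) * M^(1-α)) :=
            mul_le_mul_of_nonneg_left hb1 hK1nn
        _ ≤ K1 * ((3/(1-α)) * A^(1-α)) := by
            apply mul_le_mul_of_nonneg_left _ hK1nn
            apply mul_le_mul_of_nonneg_left hMA1
            have : (0:ℝ) < 1 - α := by linarith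
            positivity
        _ = c1 * A^(1-r) := by
            rw [hK1def, hc1def, ← hcomb1]; ring
    have ht2 : K2 * ∑' n, P2 n ≤ c2 * A^(1-r) := by
      calc K2 * ∑' n, P2 n ≤ K2 * ((12/(1-β)) * M^(1-β)) :=
            mul_le_mul_of_nonneg_left hb2 hK2nn
        _ ≤ K2 * ((12/(1-β)) * A^(1-β)) := by
            apply mul_le_mul_of_nonneg_left _ hK2nn
            apply mul_le_mul_of_nonneg_left hMA2
            have : (0:ℝ) < 1 - β := by linarith
            positivity
        _ = c2 * A^(1-r) := by
            rw [hK2def, hc2def, ← hcomb2]; ring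
    have hrq : (0:ℝ) ≤ 2*r/(r-1) := by positivity
    have ht3 : ∑' n, P3 n ≤ c3 * A^(1-r) := by
      calc ∑' n, P3 n ≤ (2*r/(r-1)) * M^(1-r) := hb3
        _ ≤ (2*r/(r-1)) * (3^(r-1) * A^(1-r)) := mul_le_mul_of_nonneg_left hMA3 hrq
        _ = c3 * A^(1-r) := by rw [hc3def]; ring
    have ht4 : ∑' n, P4 n ≤ c4 * A^(1-r) := by
      calc ∑' n, P4 n ≤ Ct * M^(1-r) := hb4
        _ ≤ Ct * (3^(r-1) * A^(1-r)) := mul_le_mul_of_nonneg_left hMA3 hCtnn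
        _ = c4 * A^(1-r) := by rw [hc4def]; ring
    calc ∑' n : ℤ, jb (n:ℝ)^(-α) * jb ((n:ℝ)-a)^(-β)
        ≤ K1 * ∑' n, P1 n + (K2 * ∑' n, P2 n + ((∑' n, P3 n) + ∑' n, P4 n)) := htot
      _ ≤ c1 * A^(1-r) + (c2 * A^(1-r) + (c3 * A^(1-r) + c4 * A^(1-r))) := by
          linarith
      _ = (c1+c2+c3+c4) * A^(1-r) := by ring
      _ ≤ (c0+c1+c2+c3+c4+1) * A^(1-r) :=
          mul_le_mul_of_nonneg_right (by linarith) hApow.le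
-- chunk I : core lemma for α > 1
lemma core_gt {α β : ℝ} (hα : 1 < α) (hβ0 : 0 ≤ β) (hβα : β ≤ α) :
    ∃ C : ℝ, 0 < C ∧ ∀ a : ℝ,
      ∑' n : ℤ, jb (n:ℝ)^(-α) * jb ((n:ℝ)-a)^(-β) ≤ C * jb a ^ (-β) := by
  set S : ℝ := ∑' n : ℤ, jb (n:ℝ)^(-α) with hSdef
  have hSnn : 0 ≤ S := tsum_nonneg (fun n => Real.rpow_nonneg (jb_nonneg _) _)
  refine ⟨2^β * (2*S + 2^α*S) + 1, by positivity, ?_⟩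
  intro a
  set A : ℝ := jb a with hAdef
  have hA0 : (0:ℝ) < A := jb_pos a
  have hApow : (0:ℝ) < A^(-β) := Real.rpow_pos_of_pos hA0 _
  have hKnn : (0:ℝ) ≤ 2^β * A^(-β) := mul_nonneg (by positivity) hApow.le
  have hpt : ∀ n : ℤ, jb (n:ℝ)^(-α) * jb ((n:ℝ)-a)^(-β)
      ≤ 2^β * A^(-β) * (2 * jb (n:ℝ)^(-α) + jb ((n:ℝ)-a)^(-α)) := by
    intro n
    set x : ℝ := (n:ℝ) with hxdef
    have hjnn : (0:ℝ) ≤ jb x ^ (-α) := Real.rpow_nonneg (jb_nonneg _) _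
    have hjnn2 : (0:ℝ) ≤ jb (x-a) ^ (-α) := Real.rpow_nonneg (jb_nonneg _) _
    by_cases h1 : |x| ≤ |a|/2
    · have htri1 : |a| ≤ |x - a| + |x| := by
        calc |a| = |x - (x - a)| := by ring_nf
          _ ≤ |x| + |x - a| := abs_sub _ _
          _ = |x - a| + |x| := by ring
      have hjb : A/2 ≤ jb (x - a) := by
        have := jb_half (x := x - a) (a := a) (by linarith)
        linarith
      have hb : jb (x-a)^(-β) ≤ 2^β * A^(-β) := by
        have h2 := rpow_neg_anti (by positivity : (0:ℝ) < A/2) hjb hβ0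
        rwa [div_rpow_neg hA0 (by norm_num : (0:ℝ) < 2)] at h2
      have hmul : jb x^(-α) * jb (x-a)^(-β) ≤ jb x^(-α) * (2^β * A^(-β)) :=
        mul_le_mul_of_nonneg_left hb hjnn
      nlinarith [mul_nonneg hKnn hjnn, mul_nonneg hKnn hjnn2]
    · have hjb : A/2 ≤ jb x := by
        have := jb_half (x := x) (a := a) (by linarith [abs_nonneg x])
        linarith
      have hb : jb x^(-β) ≤ 2^β * A^(-β) := by
        have h2 := rpow_neg_anti (by positivity : (0:ℝ) < A/2) hjb hβ0
        rwa [div_rpow_neg hA0 (by norm_num : (0:ℝ) < 2)] at h2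
      have hsplit : jb x^(-α) = jb x^(-β) * jb x^(-(α-β)) := by
        rw [← Real.rpow_add (jb_pos x)]; congr 1; ring
      have hms : jb x^(-(α-β)) * jb (x-a)^(-β)
          ≤ jb x^(-((α-β)+β)) + jb (x-a)^(-((α-β)+β)) :=
        max_split (one_le_jb _) (one_le_jb _) (by linarith) hβ0
      have he : (α-β)+β = α := by ring
      rw [he] at hms
      have hprod : jb x^(-α) * jb (x-a)^(-β)
          = jb x^(-β) * (jb x^(-(α-β)) * jb (x-a)^(-β)) := by
        rw [hsplit]; ring
      have hstep : jb x^(-β) * (jb x^(-(α-β)) * jb (x-a)^(-β))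
          ≤ (2^β * A^(-β)) * (jb x^(-α) + jb (x-a)^(-α)) := by
        apply mul_le_mul hb hms
        · apply mul_nonneg (Real.rpow_nonneg (jb_nonneg _) _) (Real.rpow_nonneg (jb_nonneg _) _)
        · exact hKnn
      rw [hprod]
      nlinarith [mul_nonneg hKnn hjnn]
  have hsum1 : Summable (fun n : ℤ => 2 * jb (n:ℝ)^(-α)) := (sumJ hα).mul_left 2
  have hsum2 : Summable (fun n : ℤ => jb ((n:ℝ)-a)^(-α)) := summable_shiftJ hα a
  have hsumg : Summable (fun n : ℤ =>
      2^β * A^(-β) * (2 * jb (n:ℝ)^(-α) + jb ((n:ℝ)-a)^(-α))) :=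
    (hsum1.add hsum2).mul_left _
  have hsf : Summable (fun n : ℤ => jb (n:ℝ)^(-α) * jb ((n:ℝ)-a)^(-β)) :=
    summable_f (by linarith) hβ0 (by linarith) a
  have htot := Summable.tsum_le_tsum hpt hsf hsumg
  rw [tsum_mul_left, Summable.tsum_add hsum1 hsum2, tsum_mul_left] at htot
  have hshift := tsum_shiftJ_le hα a
  calc ∑' n : ℤ, jb (n:ℝ)^(-α) * jb ((n:ℝ)-a)^(-β)
      ≤ 2^β * A^(-β) * (2 * S + ∑' n : ℤ, jb ((n:ℝ)-a)^(-α)) := htot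
    _ ≤ 2^β * A^(-β) * (2 * S + 2^α * S) := by
        apply mul_le_mul_of_nonneg_left _ hKnn
        linarith
    _ = (2^β * (2*S + 2^α*S)) * A^(-β) := by ring
    _ ≤ (2^β * (2*S + 2^α*S) + 1) * A^(-β) :=
        mul_le_mul_of_nonneg_right (by linarith) hApow.le

open Classical in
theorem stmt1 (α β ε : ℝ) (hαβ : β ≤ α) (hβ : 0 ≤ β) (hsum : 1 < α + β) (hε : 0 < ε) :
    ∃ C : ℝ, 0 < C ∧ ∀ a : ℝ,
      (∑' n : ℤ, 1 / (jb (n : ℝ) ^ α * jb ((n : ℝ) - a) ^ β)) ≤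
        C * jb a ^ (-(β - (if α = 1 then ε else max (1 - α) 0))) := by
  have hE : ∀ a : ℝ, (∑' n : ℤ, 1 / (jb (n : ℝ) ^ α * jb ((n : ℝ) - a) ^ β))
      = ∑' n : ℤ, jb (n:ℝ)^(-α) * jb ((n:ℝ)-a)^(-β) := by
    intro a
    apply tsum_congr
    intro n
    rw [Real.rpow_neg (jb_nonneg _), Real.rpow_neg (jb_nonneg _), one_div, mul_inv]
  rcases lt_trichotomy α 1 with hlt | heq | hgt
  · -- α < 1
    obtain ⟨C, hC, hB⟩ := core_lt (α := α) (β := β) (by linarith) hlt hβ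
      (by linarith) hsum
    refine ⟨C, hC, fun a => ?_⟩
    rw [hE a]
    have hif : (if α = 1 then ε else max (1 - α) 0) = 1 - α := by
      rw [if_neg (by linarith), max_eq_left (by linarith)]
    rw [hif, show -(β - (1 - α)) = 1 - (α+β) by ring]
    exact hB a
  · -- α = 1
    have hβpos : 0 < β := by rw [heq] at hsum; linarith
    set δ : ℝ := min ε (min β 1) / 4 with hδdef
    have hδpos : 0 < δ := by
      have := lt_min hε (lt_min hβpos one_pos)
      rw [hδdef]; linarith
    have hδε : δ ≤ ε/4 := by
      have := min_le_left ε (min β 1)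
      rw [hδdef]; linarith
    have hδβ : δ ≤ β/4 := by
      have h1 := min_le_right ε (min β 1)
      have h2 := min_le_left β 1
      rw [hδdef]; linarith
    have hδ1 : δ ≤ 1/4 := by
      have h1 := min_le_right ε (min β 1)
      have h2 := min_le_right β 1
      rw [hδdef]; linarith
    set α' : ℝ := 1 - δ with hα'def
    set β' : ℝ := min β (1 - δ) with hβ'def
    have hβ'δ : δ < β' := lt_min (by linarith) (by linarith)
    have hβ'β : β' ≤ β := min_le_left _ _
    obtain ⟨C, hC, hB⟩ := core_lt (α := α') (β := β') (by linarith) (by linarith)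
      (le_min hβ (by linarith)) (by
        calc β' ≤ 1 - δ := min_le_right _ _
          _ < 1 := by linarith)
      (by linarith)
    refine ⟨C, hC, fun a => ?_⟩
    rw [hE a, if_pos heq]
    have hpt : ∀ n : ℤ, jb (n:ℝ)^(-α) * jb ((n:ℝ)-a)^(-β)
        ≤ jb (n:ℝ)^(-α') * jb ((n:ℝ)-a)^(-β') := by
      intro n
      apply mul_le_mul
      · exact Real.rpow_le_rpow_of_exponent_le (one_le_jb _) (by rw [heq]; linarith)
      · exact Real.rpow_le_rpow_of_exponent_le (one_le_jb _) (by linarith)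
      · exact Real.rpow_nonneg (jb_nonneg _) _
      · exact Real.rpow_nonneg (jb_nonneg _) _
    have h1 : ∑' n : ℤ, jb (n:ℝ)^(-α) * jb ((n:ℝ)-a)^(-β)
        ≤ ∑' n : ℤ, jb (n:ℝ)^(-α') * jb ((n:ℝ)-a)^(-β') :=
      Summable.tsum_le_tsum hpt (summable_f (by linarith) hβ (by linarith) a)
        (summable_f (by linarith) (by linarith [hβ'δ, hδpos]) (by linarith) a)
    have hexp : 1 - (α' + β') ≤ -(β - ε) := by
      have hβ1 : β ≤ 1 := by rw [heq] at hαβ; exact hαβ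
      rcases le_total β (1 - δ) with h | h
      · rw [hβ'def, min_eq_left h, hα'def]; linarith
      · rw [hβ'def, min_eq_right h, hα'def]; linarith
    have h2 : jb a ^ (1 - (α' + β')) ≤ jb a ^ (-(β - ε)) :=
      Real.rpow_le_rpow_of_exponent_le (one_le_jb a) hexp
    calc ∑' n : ℤ, jb (n:ℝ)^(-α) * jb ((n:ℝ)-a)^(-β)
        ≤ ∑' n : ℤ, jb (n:ℝ)^(-α') * jb ((n:ℝ)-a)^(-β') := h1
      _ ≤ C * jb a ^ (1 - (α' + β')) := hB a
      _ ≤ C * jb a ^ (-(β - ε)) := mul_le_mul_of_nonneg_left h2 hC.le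
  · -- α > 1
    obtain ⟨C, hC, hB⟩ := core_gt hgt hβ hαβ
    refine ⟨C, hC, fun a => ?_⟩
    rw [hE a]
    have hif : (if α = 1 then ε else max (1 - α) 0) = 0 := by
      rw [if_neg (by linarith), max_eq_right (by linarith)]
    rw [hif, show -(β - 0) = -β by ring]
    exact hB a
end

section
/- For every ε > 0 there exists a constant C_ε > 0 such that for every m ∈ ℤ \ {0}, every a₀, b₀ ∈ ℤ, and every M, N ≥ 1, the number of pairs (a, b) ∈ ℤ² with m = a·b, |a − a₀| ≤ M, and |b − b₀| ≤ N is at most C_ε M^ε N^ε. -/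
set_option maxHeartbeats 1000000

open Finset

open scoped Classical in
noncomputable def dbox (n : ℕ) (α X β Y : ℝ) : Finset (ℕ×ℕ) :=
  ((n.divisorsAntidiagonal).filter
    (fun d => α ≤ (d.1:ℝ) ∧ (d.1:ℝ) ≤ α + X ∧ β ≤ (d.2:ℝ) ∧ (d.2:ℝ) ≤ β + Y))

noncomputable def dcnt (n : ℕ) (α X β Y : ℝ) : ℕ := (dbox n α X β Y).card

def scnt (B₀ n : ℕ) : ℕ := (n.primeFactors.filter (· ≤ B₀)).card

-- separation lemma
lemma sep_le (q : ℕ) (a a' : ℕ) (h1 : q ∣ a) (h2 : q ∣ a') (hne : a ≠ a')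
    (α X : ℝ) (ha1 : α ≤ (a:ℝ)) (ha2 : (a:ℝ) ≤ α + X) (hb1 : α ≤ (a':ℝ)) (hb2 : (a':ℝ) ≤ α + X) :
    (q:ℝ) ≤ X := by
  have hd : (q:ℤ) ∣ (a:ℤ) - (a':ℤ) := dvd_sub (Int.natCast_dvd_natCast.2 h1) (Int.natCast_dvd_natCast.2 h2)
  have hne' : (a:ℤ) - (a':ℤ) ≠ 0 := by
    intro h; apply hne; omega
  have := Int.le_of_dvd (abs_pos.2 hne') ((dvd_abs _ _).2 hd)
  have h2' : (|(a:ℤ) - (a':ℤ)| : ℝ) ≤ X := by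
    push_cast
    rw [abs_le]
    constructor <;> linarith
  calc (q:ℝ) ≤ (|(a:ℤ) - (a':ℤ)| : ℝ) := by exact_mod_cast this
    _ ≤ X := h2'

lemma card_le_one_fst (F : Finset (ℕ×ℕ)) (n : ℕ) (hn : n ≠ 0)
    (hF : ∀ d ∈ F, d.1 * d.2 = n) (q : ℕ)
    (hq : ∀ d ∈ F, q ∣ d.1) (α X : ℝ)
    (hI : ∀ d ∈ F, α ≤ (d.1:ℝ) ∧ (d.1:ℝ) ≤ α + X) (hX : X < (q:ℝ)) : F.card ≤ 1 := by
  rw [Finset.card_le_one]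
  intro d hd d' hd'
  have h1 : d.1 = d'.1 := by
    by_contra hne
    exact absurd (sep_le q d.1 d'.1 (hq d hd) (hq d' hd') hne α X (hI d hd).1 (hI d hd).2
      (hI d' hd').1 (hI d' hd').2) (not_le.2 hX)
  have h2 : d.2 = d'.2 := by
    have e1 := hF d hd; have e2 := hF d' hd'
    rw [h1] at e1
    have hd1 : d'.1 ≠ 0 := by rintro h; rw [h] at e2; simp at e2; exact hn e2.symm
    exact Nat.eq_of_mul_eq_mul_left (Nat.pos_of_ne_zero hd1) (e1.trans e2.symm)
  exact Prod.ext h1 h2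

lemma card_le_one_snd (F : Finset (ℕ×ℕ)) (n : ℕ) (hn : n ≠ 0)
    (hF : ∀ d ∈ F, d.1 * d.2 = n) (q : ℕ)
    (hq : ∀ d ∈ F, q ∣ d.2) (β Y : ℝ)
    (hI : ∀ d ∈ F, β ≤ (d.2:ℝ) ∧ (d.2:ℝ) ≤ β + Y) (hY : Y < (q:ℝ)) : F.card ≤ 1 := by
  rw [Finset.card_le_one]
  intro d hd d' hd'
  have h2 : d.2 = d'.2 := by
    by_contra hne
    exact absurd (sep_le q d.2 d'.2 (hq d hd) (hq d' hd') hne β Y (hI d hd).1 (hI d hd).2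
      (hI d' hd').1 (hI d' hd').2) (not_le.2 hY)
  have h1 : d.1 = d'.1 := by
    have e1 := hF d hd; have e2 := hF d' hd'
    rw [h2] at e1
    have hd2 : d'.2 ≠ 0 := by rintro h; rw [h] at e2; simp at e2; exact hn e2.symm
    exact Nat.eq_of_mul_eq_mul_right (Nat.pos_of_ne_zero hd2) (e1.trans e2.symm)
  exact Prod.ext h1 h2

open scoped Classical in
lemma dbox_spec (n : ℕ) (α X β Y : ℝ) (d : ℕ × ℕ) :
    d ∈ dbox n α X β Y ↔ (d.1 * d.2 = n ∧ n ≠ 0) ∧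
      (α ≤ (d.1:ℝ) ∧ (d.1:ℝ) ≤ α + X ∧ β ≤ (d.2:ℝ) ∧ (d.2:ℝ) ≤ β + Y) := by
  unfold dbox
  rw [Finset.mem_filter, Nat.mem_divisorsAntidiagonal]

open scoped Classical in
lemma fiber_le (n p : ℕ) (hn : n ≠ 0) (hp : p.Prime) (i : ℕ)
    (hie : i ≤ n.factorization p) (α X β Y : ℝ) :
    ((dbox n α X β Y).filter (fun d => d.1.factorization p = i)).card ≤
    dcnt (ordCompl[p] n) (α/(p:ℝ)^i) (X/(p:ℝ)^i)
      (β/(p:ℝ)^(n.factorization p - i)) (Y/(p:ℝ)^(n.factorization p - i)) := by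
  set e := n.factorization p with he
  set j := e - i with hj
  have hij : i + j = e := by omega
  have hp0 : (0:ℝ) < (p:ℝ) := by exact_mod_cast hp.pos
  have hppos : (0:ℝ) < (p:ℝ)^i := pow_pos hp0 i
  have hqpos : (0:ℝ) < (p:ℝ)^j := pow_pos hp0 j
  have key : ∀ d ∈ (dbox n α X β Y).filter (fun d => d.1.factorization p = i),
      (p^i ∣ d.1) ∧ (p^j ∣ d.2) ∧ d.1 * d.2 = n := by
    intro d hd
    rw [Finset.mem_filter] at hd
    obtain ⟨hdb, hvi⟩ := hd
    rw [dbox_spec] at hdb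
    have hmul : d.1 * d.2 = n := hdb.1.1
    have h1 : d.1 ≠ 0 := by rintro h; rw [h] at hmul; simp at hmul; exact hn hmul.symm
    have h2 : d.2 ≠ 0 := by rintro h; rw [h] at hmul; simp at hmul; exact hn hmul.symm
    have hfm := Nat.factorization_mul h1 h2
    have hv2 : d.2.factorization p = j := by
      have : (d.1 * d.2).factorization p = d.1.factorization p + d.2.factorization p := by
        rw [hfm]; simp
      rw [hmul, ← he, hvi] at this
      omega
    refine ⟨?_, ?_, hmul⟩
    · rw [← hvi]; exact Nat.ordProj_dvd d.1 p
    · rw [← hv2]; exact Nat.ordProj_dvd d.2 p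
  apply Finset.card_le_card_of_injOn (fun d => (d.1/p^i, d.2/p^j))
  · intro d hd
    obtain ⟨hdvd1, hdvd2, hmul⟩ := key d hd
    rw [Finset.mem_coe, Finset.mem_filter] at hd
    obtain ⟨hdb, hvi⟩ := hd
    rw [dbox_spec] at hdb
    have hI1 := hdb.2.1
    have hI2 := hdb.2.2.1
    have hI3 := hdb.2.2.2.1
    have hI4 := hdb.2.2.2.2
    rw [Finset.mem_coe, dbox_spec]
    have hc1 : ((d.1/p^i : ℕ):ℝ) = (d.1:ℝ)/((p:ℝ)^i) := by
      rw [Nat.cast_div hdvd1 (by exact_mod_cast hppos.ne')]; push_cast; ring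
    have hc2 : ((d.2/p^j : ℕ):ℝ) = (d.2:ℝ)/((p:ℝ)^j) := by
      rw [Nat.cast_div hdvd2 (by exact_mod_cast hqpos.ne')]; push_cast; ring
    refine ⟨⟨?_, (Nat.ordCompl_pos p hn).ne'⟩, ?_, ?_, ?_, ?_⟩
    · rw [Nat.div_mul_div_comm hdvd1 hdvd2, hdb.1.1, ← pow_add, hij]
    · rw [hc1]; gcongr
    · rw [hc1, ← add_div]; gcongr
    · rw [hc2]; gcongr
    · rw [hc2, ← add_div]; gcongr
  · intro d hd d' hd' heq2
    obtain ⟨hdvd1, hdvd2, hmul⟩ := key d hd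
    obtain ⟨hdvd1', hdvd2', hmul'⟩ := key d' hd'
    have e1 : d.1/p^i = d'.1/p^i := congrArg Prod.fst heq2
    have e2 : d.2/p^j = d'.2/p^j := congrArg Prod.snd heq2
    have : d.1 = d'.1 := by
      rw [← Nat.div_mul_cancel hdvd1, ← Nat.div_mul_cancel hdvd1', e1]
    have : d.2 = d'.2 := by
      rw [← Nat.div_mul_cancel hdvd2, ← Nat.div_mul_cancel hdvd2', e2]
    exact Prod.ext ‹d.1 = d'.1› ‹d.2 = d'.2›

lemma nat38 : ∀ e : ℕ, 1 ≤ e → 3 * (e + 1) ≤ 8 ^ e := by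
  intro e he
  induction e with
  | zero => omega
  | succ k ih =>
    rcases Nat.eq_or_lt_of_le he with h | h
    · simp [← h]
    · have hk : 1 ≤ k := by omega
      have := ih hk
      have h8 : 8 ^ k ≥ 8 := by
        calc 8 ^ k ≥ 8 ^ 1 := Nat.pow_le_pow_right (by norm_num) hk
        _ = 8 := by norm_num
      calc 3 * (k + 1 + 1) = 3 * (k + 1) + 3 := by ring
      _ ≤ 8 ^ k + 3 := by omega
      _ ≤ 8 ^ (k + 1) := by
          have : 8 ^ (k+1) = 8 * 8 ^ k := by ring
          omega

lemma numeric_key (ε' : ℝ) (h0 : 0 < ε') (h1 : ε' ≤ 1) (q : ℝ) (hq : 1 ≤ q)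
    (h8 : (8:ℝ) ≤ q ^ ε') (e : ℕ) (he : 1 ≤ e) (Z : ℝ) (hZ : 1 ≤ Z) :
    ((e:ℝ) + 1) * (Z + 2) ^ ε' ≤ (q ^ e * Z + 2) ^ ε' := by
  have hq0 : (0:ℝ) ≤ q := by linarith
  have hZ0 : (0:ℝ) ≤ Z := by linarith
  have step1 : (Z + 2) ^ ε' ≤ (3 * Z) ^ ε' :=
    Real.rpow_le_rpow (by linarith) (by linarith) h0.le
  have step2 : ((3:ℝ) * Z) ^ ε' = 3 ^ ε' * Z ^ ε' := Real.mul_rpow (by norm_num) hZ0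
  have step3 : (3:ℝ) ^ ε' ≤ 3 := by
    calc (3:ℝ) ^ ε' ≤ 3 ^ (1:ℝ) := Real.rpow_le_rpow_of_exponent_le (by norm_num) h1
    _ = 3 := Real.rpow_one 3
  have hZe : (0:ℝ) ≤ Z ^ ε' := Real.rpow_nonneg hZ0 _
  have step4 : ((e:ℝ) + 1) * 3 ≤ 8 ^ e := by
    have := nat38 e he
    have : ((3 * (e+1) : ℕ) : ℝ) ≤ ((8 ^ e : ℕ) : ℝ) := by exact_mod_cast this
    push_cast at this
    linarith
  have step5 : ((8:ℝ)) ^ e ≤ (q ^ ε') ^ e := pow_le_pow_left₀ (by norm_num) h8 e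
  have step6 : ((q ^ ε') ^ e : ℝ) = (q ^ e) ^ ε' := by
    rw [← Real.rpow_natCast (q ^ ε') e, ← Real.rpow_natCast q e,
      ← Real.rpow_mul hq0, ← Real.rpow_mul hq0, mul_comm]
  have step7 : (q ^ e) ^ ε' * Z ^ ε' = (q ^ e * Z) ^ ε' :=
    (Real.mul_rpow (by positivity) hZ0).symm
  have step8 : ((q ^ e * Z) : ℝ) ^ ε' ≤ (q ^ e * Z + 2) ^ ε' :=
    Real.rpow_le_rpow (by positivity) (by linarith) h0.le
  calc ((e:ℝ) + 1) * (Z + 2) ^ ε' ≤ ((e:ℝ) + 1) * (3 ^ ε' * Z ^ ε') := by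
        rw [← step2]; exact mul_le_mul_of_nonneg_left step1 (by positivity)
  _ = ((e:ℝ) + 1) * 3 ^ ε' * Z ^ ε' := by ring
  _ ≤ ((e:ℝ) + 1) * 3 * Z ^ ε' := by
        apply mul_le_mul_of_nonneg_right _ hZe
        exact mul_le_mul_of_nonneg_left step3 (by positivity)
  _ ≤ 8 ^ e * Z ^ ε' := mul_le_mul_of_nonneg_right step4 hZe
  _ ≤ (q ^ ε') ^ e * Z ^ ε' := mul_le_mul_of_nonneg_right step5 hZe
  _ = (q ^ e * Z) ^ ε' := by rw [step6, step7]
  _ ≤ _ := step8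

lemma log_interval_bound (δ c : ℝ) (hδ : 0 < δ) (hc2 : 2 ≤ c)
    (hc : 1 / (δ * Real.log 2) ≤ c) (X : ℝ) (hX : 1 ≤ X) :
    2 + (Nat.log 2 ⌊X⌋₊ : ℝ) ≤ c * X ^ δ := by
  set L := Nat.log 2 ⌊X⌋₊ with hL
  have hfl : (1:ℕ) ≤ ⌊X⌋₊ := Nat.le_floor (by exact_mod_cast hX)
  have h2L : ((2:ℝ)) ^ L ≤ X := by
    have := Nat.pow_log_le_self 2 (by omega : ⌊X⌋₊ ≠ 0)
    calc ((2:ℝ))^L = ((2^L : ℕ) : ℝ) := by push_cast; ring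
    _ ≤ (⌊X⌋₊ : ℝ) := by exact_mod_cast this
    _ ≤ X := Nat.floor_le (by linarith)
  have hlog2 : (0:ℝ) < Real.log 2 := Real.log_pos (by norm_num)
  have hXδ : Real.exp ((L:ℝ) * δ * Real.log 2) ≤ X ^ δ := by
    have h1 : ((2:ℝ) ^ L) ^ δ ≤ X ^ δ := Real.rpow_le_rpow (by positivity) h2L hδ.le
    have h2 : ((2:ℝ) ^ L) ^ δ = Real.exp ((L:ℝ) * δ * Real.log 2) := by
      rw [← Real.rpow_natCast 2 L, ← Real.rpow_mul (by norm_num : (0:ℝ) ≤ 2)]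
      rw [Real.rpow_def_of_pos (by norm_num : (0:ℝ) < 2)]
      ring_nf
    rw [← h2]; exact h1
  have hexp : 1 + (L:ℝ) * δ * Real.log 2 ≤ Real.exp ((L:ℝ) * δ * Real.log 2) := by
    have := Real.add_one_le_exp ((L:ℝ) * δ * Real.log 2)
    linarith
  have hcpos : 0 < δ * Real.log 2 := by positivity
  have hkey : 1 ≤ c * (δ * Real.log 2) := by
    rw [div_le_iff₀ hcpos] at hc
    linarith
  have hLnn : (0:ℝ) ≤ (L:ℝ) := Nat.cast_nonneg L
  calc 2 + (L:ℝ) ≤ c * (1 + (L:ℝ) * δ * Real.log 2) := by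
        have : c * (1 + (L:ℝ) * δ * Real.log 2) = c + (L:ℝ) * (c * (δ * Real.log 2)) := by ring
        rw [this]
        have h1 : (L:ℝ) * 1 ≤ (L:ℝ) * (c * (δ * Real.log 2)) :=
          mul_le_mul_of_nonneg_left hkey hLnn
        linarith
  _ ≤ c * Real.exp ((L:ℝ) * δ * Real.log 2) := by
        apply mul_le_mul_of_nonneg_left _ (by linarith)
        have := hexp
        have h0 : (0:ℝ) ≤ (L:ℝ) * δ * Real.log 2 := by positivity
        linarith
  _ ≤ c * X ^ δ := mul_le_mul_of_nonneg_left hXδ (by linarith)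

open scoped Classical in
theorem dcnt_main (ε' : ℝ) (hε : 0 < ε') (hε1 : ε' ≤ 1) (B₀ : ℕ)
    (hB : ∀ p : ℕ, p.Prime → B₀ < p → (8:ℝ) ≤ (p:ℝ) ^ ε') :
    ∀ n : ℕ, n ≠ 0 → ∀ α β X Y : ℝ, 0 ≤ X → 0 ≤ Y →
      ((dcnt n α X β Y : ℝ)) ≤
        (2 + (Nat.log 2 ⌊X⌋₊ : ℝ)) ^ (scnt B₀ n) * (2 * (X*Y+2) ^ ε') := by
  intro n
  induction n using Nat.strong_induction_on with
  | _ n IH =>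
  intro hn α β X Y hX hY
  set L : ℕ := Nat.log 2 ⌊X⌋₊ with hLdef
  have hbase : (1:ℝ) ≤ 2 + (L : ℝ) := by
    have : (0:ℝ) ≤ (L : ℝ) := Nat.cast_nonneg _
    linarith
  have hrp1 : (1:ℝ) ≤ (X*Y+2) ^ ε' := by
    calc (1:ℝ) = 1 ^ ε' := (Real.one_rpow _).symm
    _ ≤ (X*Y+2) ^ ε' := Real.rpow_le_rpow (by norm_num) (by nlinarith) hε.le
  have hpow1 : (1:ℝ) ≤ (2 + (L : ℝ)) ^ (scnt B₀ n) := one_le_pow₀ hbase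
  by_cases hn1 : n = 1
  · subst hn1
    have hle : dcnt 1 α X β Y ≤ 1 := by
      unfold dcnt dbox
      calc _ ≤ (Nat.divisorsAntidiagonal 1).card := Finset.card_filter_le _ _
      _ = 1 := by rw [Nat.divisorsAntidiagonal_one]; rfl
    calc (dcnt 1 α X β Y : ℝ) ≤ 1 := by exact_mod_cast hle
    _ ≤ _ := by nlinarith [hpow1, hrp1]
  -- main case : n has a prime factor
  set p := n.minFac with hpdef
  have hp : p.Prime := Nat.minFac_prime hn1
  have hpd : p ∣ n := Nat.minFac_dvd n
  have hp1R : (1:ℝ) ≤ (p:ℝ) := by exact_mod_cast hp.one_lt.le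
  have hp0R : (0:ℝ) < (p:ℝ) := by linarith
  set e := n.factorization p with hedef
  have he1 : 1 ≤ e := hp.factorization_pos_of_dvd hn hpd
  set n' := ordCompl[p] n with hn'def
  have hn'0 : n' ≠ 0 := (Nat.ordCompl_pos p hn).ne'
  have hn'lt : n' < n := Nat.div_lt_self (Nat.pos_of_ne_zero hn)
    (Nat.one_lt_pow (by omega) hp.one_lt)
  have hs_mono : scnt B₀ n' ≤ scnt B₀ n :=
    Finset.card_le_card (Finset.filter_subset_filter _
      (Nat.primeFactors_mono (Nat.ordCompl_dvd n p) hn))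
  set S := dbox n α X β Y with hSdef
  set c : ℕ → ℕ := fun i => ((S.filter (fun d => d.1.factorization p = i)).card) with hcdef
  have hmemS : ∀ d ∈ S, d.1 * d.2 = n ∧ d.1 ≠ 0 ∧ d.2 ≠ 0 ∧
      (α ≤ (d.1:ℝ) ∧ (d.1:ℝ) ≤ α + X ∧ β ≤ (d.2:ℝ) ∧ (d.2:ℝ) ≤ β + Y) := by
    intro d hd
    rw [hSdef, dbox_spec] at hd
    have hmul := hd.1.1
    have h1 : d.1 ≠ 0 := by rintro h; rw [h] at hmul; simp at hmul; exact hn hmul.symm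
    have h2 : d.2 ≠ 0 := by rintro h; rw [h] at hmul; simp at hmul; exact hn hmul.symm
    exact ⟨hmul, h1, h2, hd.2⟩
  have hvle : ∀ d ∈ S, d.1.factorization p ≤ e ∧ d.2.factorization p = e - d.1.factorization p := by
    intro d hd
    obtain ⟨hmul, h1, h2, -⟩ := hmemS d hd
    have hfm : (d.1 * d.2).factorization p = d.1.factorization p + d.2.factorization p := by
      rw [Nat.factorization_mul h1 h2]; simp
    rw [hmul] at hfm
    omega
  have hsum : dcnt n α X β Y = ∑ i ∈ Finset.range (e+1), c i := by
    apply Finset.card_eq_sum_card_fiberwise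
    intro d hd
    rw [Finset.mem_coe, Finset.mem_range]
    dsimp only
    have := (hvle d hd).1
    omega
  set T := (Finset.range (e+1)).filter (fun i => c i ≠ 0) with hTdef
  have hsumT : ∑ i ∈ Finset.range (e+1), c i = ∑ i ∈ T, c i :=
    (Finset.sum_filter_ne_zero _).symm
  have hTrange : ∀ i ∈ T, i ≤ e := by
    intro i hi
    rw [hTdef, Finset.mem_filter, Finset.mem_range] at hi
    omega
  have hw : ∀ i ∈ T, ∃ d, d ∈ S ∧ d.1.factorization p = i := by
    intro i hi
    rw [hTdef, Finset.mem_filter] at hi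
    obtain ⟨d, hd⟩ := Finset.card_pos.1 (Nat.pos_of_ne_zero hi.2)
    rw [Finset.mem_filter] at hd
    exact ⟨d, hd.1, hd.2⟩
  have hsepX : ∀ i ∈ T, ∀ i' ∈ T, i < i' → ((p:ℝ))^i ≤ X := by
    intro i hi i' hi' hii'
    obtain ⟨d, hdS, hdv⟩ := hw i hi
    obtain ⟨d', hd'S, hd'v⟩ := hw i' hi'
    have hne : d.1 ≠ d'.1 := by
      intro h; rw [h, hd'v] at hdv; omega
    have hdvd1 : p^i ∣ d.1 := by rw [← hdv]; exact Nat.ordProj_dvd d.1 p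
    have hdvd2 : p^i ∣ d'.1 :=
      dvd_trans (pow_dvd_pow p hii'.le) (by rw [← hd'v]; exact Nat.ordProj_dvd d'.1 p)
    obtain ⟨-, -, -, hI1, hI2, -, -⟩ := hmemS d hdS
    obtain ⟨-, -, -, hI1', hI2', -, -⟩ := hmemS d' hd'S
    have := sep_le (p^i) d.1 d'.1 hdvd1 hdvd2 hne α X hI1 hI2 hI1' hI2'
    push_cast at this
    exact this
  have hsepY : ∀ i ∈ T, ∀ i' ∈ T, i' < i → ((p:ℝ))^(e-i) ≤ Y := by
    intro i hi i' hi' hii'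
    obtain ⟨d, hdS, hdv⟩ := hw i hi
    obtain ⟨d', hd'S, hd'v⟩ := hw i' hi'
    have hie := hTrange i hi
    have hie' := hTrange i' hi'
    have hv2 : d.2.factorization p = e - i := by rw [(hvle d hdS).2, hdv]
    have hv2' : d'.2.factorization p = e - i' := by rw [(hvle d' hd'S).2, hd'v]
    have hne : d.2 ≠ d'.2 := by
      intro h; rw [h, hv2'] at hv2; omega
    have hdvd1 : p^(e-i) ∣ d.2 := by rw [← hv2]; exact Nat.ordProj_dvd d.2 p
    have hdvd2 : p^(e-i) ∣ d'.2 := by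
      have hh : p^(e-i') ∣ d'.2 := by rw [← hv2']; exact Nat.ordProj_dvd d'.2 p
      exact dvd_trans (pow_dvd_pow p (by omega : e - i ≤ e - i')) hh
    obtain ⟨-, -, -, -, -, hI3, hI4⟩ := hmemS d hdS
    obtain ⟨-, -, -, -, -, hI3', hI4'⟩ := hmemS d' hd'S
    have := sep_le (p^(e-i)) d.2 d'.2 hdvd1 hdvd2 hne β Y hI3 hI4 hI3' hI4'
    push_cast at this
    exact this
  -- uniform fiber bound via induction hypothesis
  have hfib : ∀ i, i ≤ e → (c i : ℝ) ≤
      (2 + (L : ℝ)) ^ (scnt B₀ n') * (2 * (X*Y/(p:ℝ)^e + 2) ^ ε') := by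
    intro i hie
    have h1 : (c i : ℝ) ≤ (dcnt n' (α/(p:ℝ)^i) (X/(p:ℝ)^i)
        (β/(p:ℝ)^(e-i)) (Y/(p:ℝ)^(e-i)) : ℝ) := by
      exact_mod_cast fiber_le n p hn hp i hie α X β Y
    have hXi : (0:ℝ) ≤ X/(p:ℝ)^i := by positivity
    have hYi : (0:ℝ) ≤ Y/(p:ℝ)^(e-i) := by positivity
    have h2 := IH n' hn'lt hn'0 (α/(p:ℝ)^i) (β/(p:ℝ)^(e-i)) (X/(p:ℝ)^i) (Y/(p:ℝ)^(e-i)) hXi hYi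
    have hLm : (2 + (Nat.log 2 ⌊X/(p:ℝ)^i⌋₊ : ℝ)) ≤ 2 + (L:ℝ) := by
      have : Nat.log 2 ⌊X/(p:ℝ)^i⌋₊ ≤ L := by
        rw [hLdef]
        exact Nat.log_mono_right (Nat.floor_mono (div_le_self hX (one_le_pow₀ hp1R)))
      have := (Nat.cast_le (α := ℝ)).2 this
      linarith
    have hprod : X/(p:ℝ)^i * (Y/(p:ℝ)^(e-i)) = X*Y/(p:ℝ)^e := by
      rw [div_mul_div_comm, ← pow_add]
      congr 2
      omega
    calc (c i : ℝ) ≤ _ := h1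
    _ ≤ (2 + (Nat.log 2 ⌊X/(p:ℝ)^i⌋₊ : ℝ)) ^ (scnt B₀ n') *
        (2 * ((X/(p:ℝ)^i) * (Y/(p:ℝ)^(e-i)) + 2) ^ ε') := h2
    _ ≤ (2 + (L : ℝ)) ^ (scnt B₀ n') * (2 * (X*Y/(p:ℝ)^e + 2) ^ ε') := by
        rw [hprod]
        apply mul_le_mul_of_nonneg_right (pow_le_pow_left₀ (by positivity) hLm _)
        positivity
  have hcast : (dcnt n α X β Y : ℝ) = ∑ i ∈ T, (c i : ℝ) := by
    rw [hsum, hsumT]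
    push_cast
    rfl
  have hXYfe : X*Y/(p:ℝ)^e + 2 ≤ X*Y + 2 := by
    have : X*Y/(p:ℝ)^e ≤ X*Y := div_le_self (by positivity) (one_le_pow₀ hp1R)
    linarith
  have hrelax : (2 + (L : ℝ)) ^ (scnt B₀ n') * (2 * (X*Y/(p:ℝ)^e + 2) ^ ε') ≤
      (2 + (L : ℝ)) ^ (scnt B₀ n') * (2 * (X*Y + 2) ^ ε') := by
    apply mul_le_mul_of_nonneg_left _ (by positivity)
    have := Real.rpow_le_rpow (by positivity) hXYfe hε.le
    linarith
  rcases le_or_gt (p:ℕ) B₀ with hsmall | hlarge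
  · -- small prime case
    have hpmem : p ∈ (n.primeFactors.filter (· ≤ B₀)) := by
      rw [Finset.mem_filter, Nat.mem_primeFactors]
      exact ⟨⟨hp, hpd, hn⟩, hsmall⟩
    have hss : scnt B₀ n' + 1 ≤ scnt B₀ n := by
      have hsub2 : (n'.primeFactors.filter (· ≤ B₀)) ⊆
          (n.primeFactors.filter (· ≤ B₀)).erase p := by
        intro q hq
        rw [Finset.mem_filter] at hq
        rw [Finset.mem_erase]
        constructor
        · intro hqp
          have hd : q ∣ n' := (Nat.mem_primeFactors.1 hq.1).2.1
          rw [hqp] at hd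
          exact Nat.not_dvd_ordCompl hp hn hd
        · rw [Finset.mem_filter]
          exact ⟨Nat.primeFactors_mono (Nat.ordCompl_dvd n p) hn hq.1, hq.2⟩
      have h1 := Finset.card_le_card hsub2
      rw [Finset.card_erase_of_mem hpmem] at h1
      have h2 : 1 ≤ scnt B₀ n := Finset.card_pos.2 ⟨p, hpmem⟩
      unfold scnt at *
      omega
    rcases T.eq_empty_or_nonempty with hTe | hTne
    · rw [hcast, hTe]
      simp only [Finset.sum_empty]
      nlinarith [hpow1, hrp1]
    · -- card T ≤ L + 2
      have hTmax := T.max'_mem hTne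
      have hTsub : T ⊆ insert (T.max' hTne) (Finset.range (L + 1)) := by
        intro i hi
        by_cases him : i = T.max' hTne
        · rw [him]; exact Finset.mem_insert_self _ _
        · have hilt : i < T.max' hTne := lt_of_le_of_ne (Finset.le_max' T i hi) him
          have hpi := hsepX i hi _ hTmax hilt
          have h2i : ((2:ℝ))^i ≤ X := by
            refine le_trans (pow_le_pow_left₀ (by norm_num) ?_ i) hpi
            exact_mod_cast hp.two_le
          have hfl : (2:ℕ)^i ≤ ⌊X⌋₊ := Nat.le_floor (by exact_mod_cast h2i)
          have hfl0 : ⌊X⌋₊ ≠ 0 := by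
            have h1 : (1:ℕ) ≤ 2^i := Nat.one_le_two_pow
            omega
          have := (Nat.le_log_iff_pow_le one_lt_two hfl0).2 hfl
          exact Finset.mem_insert_of_mem (Finset.mem_range.2 (by omega))
      have hTcard : T.card ≤ L + 2 := by
        calc T.card ≤ _ := Finset.card_le_card hTsub
        _ ≤ (Finset.range (L+1)).card + 1 := Finset.card_insert_le _ _
        _ = L + 2 := by rw [Finset.card_range]
      set U := (2 + (L : ℝ)) ^ (scnt B₀ n') * (2 * (X*Y + 2) ^ ε') with hUdef
      have hU0 : 0 ≤ U := by positivity
      have hsb : ∑ i ∈ T, (c i : ℝ) ≤ T.card • U := by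
        apply Finset.sum_le_card_nsmul
        intro i hi
        exact le_trans (hfib i (hTrange i hi)) hrelax
      rw [hcast]
      calc ∑ i ∈ T, (c i : ℝ) ≤ T.card • U := hsb
      _ = (T.card : ℝ) * U := by rw [nsmul_eq_mul]
      _ ≤ (2 + (L:ℝ)) * U := by
          apply mul_le_mul_of_nonneg_right _ hU0
          have : (T.card : ℝ) ≤ ((L + 2 : ℕ) : ℝ) := by exact_mod_cast hTcard
          push_cast at this
          linarith
      _ = (2 + (L:ℝ)) ^ (scnt B₀ n' + 1) * (2 * (X*Y + 2) ^ ε') := by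
          rw [hUdef, pow_succ]
          ring
      _ ≤ _ := by
          apply mul_le_mul_of_nonneg_right (pow_le_pow_right₀ hbase hss)
          positivity
  · -- large prime case
    have h8 : (8:ℝ) ≤ (p:ℝ) ^ ε' := hB p hp hlarge
    rcases le_or_gt ((p:ℝ)^e) (X*Y) with hc2 | hc1
    · -- p^e ≤ XY : use numeric lemma over full range
      have hsb : ∑ i ∈ Finset.range (e+1), (c i : ℝ) ≤
          (e+1) • ((2 + (L : ℝ)) ^ (scnt B₀ n') * (2 * (X*Y/(p:ℝ)^e + 2) ^ ε')) := by
        have hsb' := Finset.sum_le_card_nsmul (Finset.range (e+1))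
          (fun i => (c i : ℝ))
          ((2 + (L : ℝ)) ^ (scnt B₀ n') * (2 * (X*Y/(p:ℝ)^e + 2) ^ ε'))
          (fun i hi => hfib i (by rw [Finset.mem_range] at hi; omega))
        rwa [Finset.card_range] at hsb' 
      have hZ1 : (1:ℝ) ≤ X*Y/(p:ℝ)^e := (one_le_div (by positivity)).2 hc2
      have hnum := numeric_key ε' hε hε1 (p:ℝ) hp1R h8 e he1 (X*Y/(p:ℝ)^e) hZ1
      have hPZ : (p:ℝ)^e * (X*Y/(p:ℝ)^e) = X*Y := by
        rw [mul_comm, div_mul_cancel₀]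
        positivity
      rw [hPZ] at hnum
      have hcast2 : (dcnt n α X β Y : ℝ) = ∑ i ∈ Finset.range (e+1), (c i : ℝ) := by
        rw [hsum]; push_cast; rfl
      rw [hcast2]
      calc ∑ i ∈ Finset.range (e+1), (c i : ℝ)
          ≤ (e+1) • ((2 + (L : ℝ)) ^ (scnt B₀ n') * (2 * (X*Y/(p:ℝ)^e + 2) ^ ε')) := hsb
      _ = (2 + (L : ℝ)) ^ (scnt B₀ n') * (2 * (((e:ℝ)+1) * (X*Y/(p:ℝ)^e + 2) ^ ε')) := by
          rw [nsmul_eq_mul]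
          push_cast
          ring
      _ ≤ (2 + (L : ℝ)) ^ (scnt B₀ n') * (2 * (X*Y + 2) ^ ε') := by
          apply mul_le_mul_of_nonneg_left _ (by positivity)
          nlinarith [hnum]
      _ ≤ _ := by
          apply mul_le_mul_of_nonneg_right (pow_le_pow_right₀ hbase hs_mono)
          positivity
    · -- XY < p^e : at most two nonempty classes, each a singleton
      have hone : ∀ i ∈ T, c i ≤ 1 := by
        intro i hi
        have hie := hTrange i hi
        have hor : X < (p:ℝ)^i ∨ Y < (p:ℝ)^(e-i) := by
          by_contra h
          push_neg at h
          have := mul_le_mul h.1 h.2 (by positivity : (0:ℝ) ≤ (p:ℝ)^(e-i)) hX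
          rw [← pow_add] at this
          have hee : i + (e - i) = e := by omega
          rw [hee] at this
          linarith
        have hFmul : ∀ d ∈ S.filter (fun d => d.1.factorization p = i), d.1 * d.2 = n := by
          intro d hd
          exact (hmemS d (Finset.mem_filter.1 hd).1).1
        rcases hor with hx | hy
        · apply card_le_one_fst _ n hn hFmul (p^i)
          · intro d hd
            rw [Finset.mem_filter] at hd
            rw [← hd.2]
            exact Nat.ordProj_dvd d.1 p
          · intro d hd
            have := (hmemS d (Finset.mem_filter.1 hd).1).2.2.2
            exact ⟨this.1, this.2.1⟩
          · push_cast
            exact hx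
        · apply card_le_one_snd _ n hn hFmul (p^(e-i))
          · intro d hd
            rw [Finset.mem_filter] at hd
            have := (hvle d hd.1).2
            rw [hd.2] at this
            rw [← this]
            exact Nat.ordProj_dvd d.2 p
          · intro d hd
            have := (hmemS d (Finset.mem_filter.1 hd).1).2.2.2
            exact ⟨this.2.2.1, this.2.2.2⟩
          · push_cast
            exact hy
      rcases T.eq_empty_or_nonempty with hTe | hTne
      · rw [hcast, hTe]
        simp only [Finset.sum_empty]
        nlinarith [hpow1, hrp1]
      · have hT2 : T.card ≤ 2 := by
          have hTsub : T ⊆ insert (T.min' hTne) {T.max' hTne} := by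
            intro i hi
            by_cases hmin : i = T.min' hTne
            · rw [hmin]; exact Finset.mem_insert_self _ _
            by_cases hmax : i = T.max' hTne
            · rw [hmax]
              exact Finset.mem_insert_of_mem (Finset.mem_singleton_self _)
            exfalso
            have hie := hTrange i hi
            have h1 : T.min' hTne < i := lt_of_le_of_ne (Finset.min'_le T i hi) (Ne.symm hmin)
            have h2 : i < T.max' hTne := lt_of_le_of_ne (Finset.le_max' T i hi) hmax
            have hx := hsepX i hi _ (T.max'_mem hTne) h2
            have hy := hsepY i hi _ (T.min'_mem hTne) h1
            have := mul_le_mul hx hy (by positivity) hX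
            rw [← pow_add] at this
            have hee : i + (e - i) = e := by omega
            rw [hee] at this
            linarith
          calc T.card ≤ _ := Finset.card_le_card hTsub
          _ ≤ ({T.max' hTne} : Finset ℕ).card + 1 := Finset.card_insert_le _ _
          _ ≤ 2 := by simp
        rw [hcast]
        have : ∑ i ∈ T, (c i : ℝ) ≤ ∑ i ∈ T, (1:ℝ) := by
          apply Finset.sum_le_sum
          intro i hi
          exact_mod_cast hone i hi
        rw [Finset.sum_const, nsmul_eq_mul, mul_one] at this
        calc ∑ i ∈ T, (c i : ℝ) ≤ (T.card : ℝ) := this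
        _ ≤ 2 := by exact_mod_cast hT2
        _ ≤ _ := by nlinarith [hpow1, hrp1]

lemma scnt_le (B₀ n : ℕ) : scnt B₀ n ≤ B₀ + 1 := by
  unfold scnt
  have hsub : n.primeFactors.filter (· ≤ B₀) ⊆ Finset.range (B₀+1) := by
    intro q hq
    rw [Finset.mem_filter] at hq
    rw [Finset.mem_range]
    omega
  calc _ ≤ _ := Finset.card_le_card hsub
  _ = B₀+1 := Finset.card_range _

lemma piece_le (m : ℤ) (hm : m ≠ 0) (P : Set (ℤ×ℤ)) (α X β Y : ℝ)
    (hP : ∀ q ∈ P, m = q.1 * q.2 ∧ α ≤ (q.1.natAbs:ℝ) ∧ (q.1.natAbs:ℝ) ≤ α+X ∧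
      β ≤ (q.2.natAbs:ℝ) ∧ (q.2.natAbs:ℝ) ≤ β+Y)
    (hsgn : ∀ q ∈ P, ∀ q' ∈ P, q.1.natAbs = q'.1.natAbs → q.1 = q'.1) :
    P.ncard ≤ dcnt m.natAbs α X β Y := by
  have hmem : ∀ q ∈ P, (q.1.natAbs, q.2.natAbs) ∈ (dbox m.natAbs α X β Y : Finset (ℕ×ℕ)) := by
    intro q hq
    rw [dbox_spec]
    obtain ⟨h1, h2, h3, h4, h5⟩ := hP q hq
    refine ⟨⟨?_, ?_⟩, h2, h3, h4, h5⟩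
    · rw [← Int.natAbs_mul, ← h1]
    · exact Int.natAbs_ne_zero.2 hm
  have hinj : Set.InjOn (fun q : ℤ×ℤ => (q.1.natAbs, q.2.natAbs)) P := by
    intro q hq q' hq' heq
    have h1 : q.1.natAbs = q'.1.natAbs := congrArg Prod.fst heq
    have h2 : q.1 = q'.1 := hsgn q hq q' hq' h1
    have hm1 := (hP q hq).1
    have hm2 := (hP q' hq').1
    have hq1 : q'.1 ≠ 0 := by
      rintro h
      rw [h] at hm2
      simp at hm2
      exact hm hm2
    have h3 : q.2 = q'.2 := by
      rw [h2] at hm1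
      exact mul_left_cancel₀ hq1 (hm1.symm.trans hm2)
    exact Prod.ext h2 h3
  have h := Set.ncard_le_ncard_of_injOn (t := ((dbox m.natAbs α X β Y : Finset (ℕ×ℕ)) : Set (ℕ×ℕ))) _ hmem hinj (Finset.finite_toSet _)
  rwa [Set.ncard_coe_finset] at h

theorem stmt2 (ε : ℝ) (hε : 0 < ε) :
    ∃ C : ℝ, 0 < C ∧ ∀ (m : ℤ), m ≠ 0 → ∀ (a₀ b₀ : ℤ) (M N : ℝ), 1 ≤ M → 1 ≤ N →
      (({p : ℤ × ℤ | m = p.1 * p.2 ∧ |(p.1 : ℝ) - (a₀ : ℝ)| ≤ M ∧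
          |(p.2 : ℝ) - (b₀ : ℝ)| ≤ N}).ncard : ℝ) ≤ C * M ^ ε * N ^ ε := by
  set ε' : ℝ := min ε 1 / 2 with hε'def
  have hmin0 : 0 < min ε 1 := lt_min hε one_pos
  have hminε : min ε 1 ≤ ε := min_le_left ε 1
  have hmin1 : min ε 1 ≤ 1 := min_le_right ε 1
  have hε'0 : 0 < ε' := by rw [hε'def]; linarith
  have hε'1 : ε' ≤ 1 := by rw [hε'def]; linarith
  have hε'ε : ε' ≤ ε := by rw [hε'def]; linarith
  have h2ε' : ε' + ε' ≤ ε := by rw [hε'def]; linarith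
  set B₀ : ℕ := ⌈(2:ℝ)^((3:ℝ)/ε')⌉₊ with hB₀def
  have hB : ∀ p : ℕ, p.Prime → B₀ < p → (8:ℝ) ≤ (p:ℝ)^ε' := by
    intro p hp hlt
    have h1 : (2:ℝ)^((3:ℝ)/ε') ≤ (B₀:ℝ) := Nat.le_ceil _
    have h2 : (B₀:ℝ) ≤ (p:ℝ) := by exact_mod_cast hlt.le
    have h3 : (2:ℝ)^((3:ℝ)/ε') ≤ (p:ℝ) := le_trans h1 h2
    have h4 : ((2:ℝ)^((3:ℝ)/ε'))^ε' = 8 := by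
      rw [← Real.rpow_mul (by norm_num : (0:ℝ) ≤ 2), div_mul_cancel₀ _ hε'0.ne']
      rw [show (3:ℝ) = ((3:ℕ):ℝ) by norm_num, Real.rpow_natCast]
      norm_num
    calc (8:ℝ) = ((2:ℝ)^((3:ℝ)/ε'))^ε' := h4.symm
    _ ≤ (p:ℝ)^ε' := Real.rpow_le_rpow (by positivity) h3 hε'0.le
  set K : ℕ := B₀ + 1 with hKdef
  have hK0 : (0:ℝ) < (K:ℝ) := by exact_mod_cast Nat.succ_pos B₀
  set δ : ℝ := ε'/(K:ℝ) with hδdef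
  have hδ0 : 0 < δ := div_pos hε'0 hK0
  set cc : ℝ := max 2 (1/(δ*Real.log 2)) with hccdef
  have hcc2 : (2:ℝ) ≤ cc := le_max_left _ _
  have hccb : 1/(δ*Real.log 2) ≤ cc := le_max_right _ _
  have hcc0 : (0:ℝ) < cc := by linarith
  refine ⟨96 * cc^K, by positivity, ?_⟩
  intro m hm a₀ b₀ M N hM hN
  set n : ℕ := m.natAbs with hndef
  have hn : n ≠ 0 := Int.natAbs_ne_zero.2 hm
  have hM0 : (0:ℝ) ≤ 2*M := by linarith
  have hN0 : (0:ℝ) ≤ 2*N := by linarith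
  set P : Set (ℤ×ℤ) := {p : ℤ × ℤ | m = p.1 * p.2 ∧ |(p.1 : ℝ) - (a₀ : ℝ)| ≤ M ∧
      |(p.2 : ℝ) - (b₀ : ℝ)| ≤ N} with hPdef
  have hPfacts : ∀ q ∈ P, m = q.1 * q.2 ∧ q.1 ∣ m ∧ q.2 ∣ m ∧ q.1 ≠ 0 ∧ q.2 ≠ 0 ∧
      ((a₀:ℝ) - M ≤ q.1 ∧ (q.1:ℝ) ≤ a₀ + M) ∧ ((b₀:ℝ) - N ≤ q.2 ∧ (q.2:ℝ) ≤ b₀ + N) := by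
    intro q hq
    obtain ⟨h1, h2, h3⟩ := hq
    have hd1 : q.1 ∣ m := Dvd.intro _ h1.symm
    have hd2 : q.2 ∣ m := Dvd.intro_left _ h1.symm
    have hz1 : q.1 ≠ 0 := by rintro h; rw [h] at h1; simp at h1; exact hm h1
    have hz2 : q.2 ≠ 0 := by rintro h; rw [h] at h1; simp at h1; exact hm h1
    rw [abs_le] at h2 h3
    exact ⟨h1, hd1, hd2, hz1, hz2, ⟨by linarith [h2.1], by linarith [h2.2]⟩,
      ⟨by linarith [h3.1], by linarith [h3.2]⟩⟩
  have hPfin : P.Finite := by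
    apply Set.Finite.subset (Set.finite_Icc ((-(n:ℤ), -(n:ℤ))) (((n:ℤ), (n:ℤ))))
    intro q hq
    obtain ⟨-, hd1, hd2, hz1, hz2, -⟩ := hPfacts q hq
    have h1 : q.1.natAbs ≤ n := Nat.le_of_dvd (Nat.pos_of_ne_zero hn)
      (Int.natAbs_dvd_natAbs.2 hd1)
    have h2 : q.2.natAbs ≤ n := Nat.le_of_dvd (Nat.pos_of_ne_zero hn)
      (Int.natAbs_dvd_natAbs.2 hd2)
    simp only [Set.mem_Icc, Prod.le_def]
    omega
  set P1 : Set (ℤ×ℤ) := {q : ℤ×ℤ | q ∈ P ∧ 0 < q.1 ∧ 0 < q.2} with hP1def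
  set P2 : Set (ℤ×ℤ) := {q : ℤ×ℤ | q ∈ P ∧ 0 < q.1 ∧ q.2 < 0} with hP2def
  set P3 : Set (ℤ×ℤ) := {q : ℤ×ℤ | q ∈ P ∧ q.1 < 0 ∧ 0 < q.2} with hP3def
  set P4 : Set (ℤ×ℤ) := {q : ℤ×ℤ | q ∈ P ∧ q.1 < 0 ∧ q.2 < 0} with hP4def
  have hfin1 : P1.Finite := hPfin.subset (fun q hq => hq.1)
  have hfin2 : P2.Finite := hPfin.subset (fun q hq => hq.1)
  have hfin3 : P3.Finite := hPfin.subset (fun q hq => hq.1)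
  have hfin4 : P4.Finite := hPfin.subset (fun q hq => hq.1)
  have hsub : P ⊆ (P1 ∪ P2) ∪ (P3 ∪ P4) := by
    intro q hq
    obtain ⟨-, -, -, hz1, hz2, -⟩ := hPfacts q hq
    rcases hz1.lt_or_gt with h1|h1 <;> rcases hz2.lt_or_gt with h2|h2
    · exact Or.inr (Or.inr ⟨hq, h1, h2⟩)
    · exact Or.inr (Or.inl ⟨hq, h1, h2⟩)
    · exact Or.inl (Or.inr ⟨hq, h1, h2⟩)
    · exact Or.inl (Or.inl ⟨hq, h1, h2⟩)
  have hn1 : P.ncard ≤ P1.ncard + P2.ncard + P3.ncard + P4.ncard := by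
    calc P.ncard ≤ ((P1 ∪ P2) ∪ (P3 ∪ P4)).ncard :=
          Set.ncard_le_ncard hsub ((hfin1.union hfin2).union (hfin3.union hfin4))
    _ ≤ (P1 ∪ P2).ncard + (P3 ∪ P4).ncard :=
          Set.ncard_union_le _ _
    _ ≤ (P1.ncard + P2.ncard) + (P3.ncard + P4.ncard) :=
          add_le_add (Set.ncard_union_le _ _) (Set.ncard_union_le _ _)
    _ = _ := by omega
  -- the four piece bounds
  have hp1 : P1.ncard ≤ dcnt n ((a₀:ℝ) - M) (2*M) ((b₀:ℝ) - N) (2*N) := by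
    apply piece_le m hm
    · intro q hq
      obtain ⟨hqP, hs1, hs2⟩ := hq
      obtain ⟨hmul, -, -, -, -, hI1, hI2⟩ := hPfacts q hqP
      have e1 : (q.1.natAbs:ℝ) = (q.1:ℝ) := by
        rw [Nat.cast_natAbs]
        exact_mod_cast abs_of_pos hs1
      have e2 : (q.2.natAbs:ℝ) = (q.2:ℝ) := by
        rw [Nat.cast_natAbs]
        exact_mod_cast abs_of_pos hs2
      rw [e1, e2]
      exact ⟨hmul, by linarith [hI1.1], by linarith [hI1.2], by linarith [hI2.1],
        by linarith [hI2.2]⟩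
    · intro q hq q' hq' h
      obtain ⟨-, hs1, -⟩ := hq
      obtain ⟨-, hs1', -⟩ := hq'
      omega
  have hp2 : P2.ncard ≤ dcnt n ((a₀:ℝ) - M) (2*M) (-(b₀:ℝ) - N) (2*N) := by
    apply piece_le m hm
    · intro q hq
      obtain ⟨hqP, hs1, hs2⟩ := hq
      obtain ⟨hmul, -, -, -, -, hI1, hI2⟩ := hPfacts q hqP
      have e1 : (q.1.natAbs:ℝ) = (q.1:ℝ) := by
        rw [Nat.cast_natAbs]
        exact_mod_cast abs_of_pos hs1
      have e2 : (q.2.natAbs:ℝ) = -(q.2:ℝ) := by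
        rw [Nat.cast_natAbs]
        exact_mod_cast abs_of_neg hs2
      rw [e1, e2]
      exact ⟨hmul, by linarith [hI1.1], by linarith [hI1.2], by linarith [hI2.2],
        by linarith [hI2.1]⟩
    · intro q hq q' hq' h
      obtain ⟨-, hs1, -⟩ := hq
      obtain ⟨-, hs1', -⟩ := hq'
      omega
  have hp3 : P3.ncard ≤ dcnt n (-(a₀:ℝ) - M) (2*M) ((b₀:ℝ) - N) (2*N) := by
    apply piece_le m hm
    · intro q hq
      obtain ⟨hqP, hs1, hs2⟩ := hq
      obtain ⟨hmul, -, -, -, -, hI1, hI2⟩ := hPfacts q hqP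
      have e1 : (q.1.natAbs:ℝ) = -(q.1:ℝ) := by
        rw [Nat.cast_natAbs]
        exact_mod_cast abs_of_neg hs1
      have e2 : (q.2.natAbs:ℝ) = (q.2:ℝ) := by
        rw [Nat.cast_natAbs]
        exact_mod_cast abs_of_pos hs2
      rw [e1, e2]
      exact ⟨hmul, by linarith [hI1.2], by linarith [hI1.1], by linarith [hI2.1],
        by linarith [hI2.2]⟩
    · intro q hq q' hq' h
      obtain ⟨-, hs1, -⟩ := hq
      obtain ⟨-, hs1', -⟩ := hq'
      omega
  have hp4 : P4.ncard ≤ dcnt n (-(a₀:ℝ) - M) (2*M) (-(b₀:ℝ) - N) (2*N) := by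
    apply piece_le m hm
    · intro q hq
      obtain ⟨hqP, hs1, hs2⟩ := hq
      obtain ⟨hmul, -, -, -, -, hI1, hI2⟩ := hPfacts q hqP
      have e1 : (q.1.natAbs:ℝ) = -(q.1:ℝ) := by
        rw [Nat.cast_natAbs]
        exact_mod_cast abs_of_neg hs1
      have e2 : (q.2.natAbs:ℝ) = -(q.2:ℝ) := by
        rw [Nat.cast_natAbs]
        exact_mod_cast abs_of_neg hs2
      rw [e1, e2]
      exact ⟨hmul, by linarith [hI1.2], by linarith [hI1.1], by linarith [hI2.2],
        by linarith [hI2.1]⟩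
    · intro q hq q' hq' h
      obtain ⟨-, hs1, -⟩ := hq
      obtain ⟨-, hs1', -⟩ := hq'
      omega
  set R : ℝ := (2 + (Nat.log 2 ⌊2*M⌋₊:ℝ))^(scnt B₀ n) * (2*((2*M)*(2*N)+2)^ε') with hRdef
  have hdc : ∀ α β : ℝ, (dcnt n α (2*M) β (2*N) : ℝ) ≤ R :=
    fun α β => dcnt_main ε' hε'0 hε'1 B₀ hB n hn α β (2*M) (2*N) hM0 hN0
  have c1 : (P1.ncard:ℝ) ≤ R := le_trans (by exact_mod_cast hp1) (hdc _ _)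
  have c2 : (P2.ncard:ℝ) ≤ R := le_trans (by exact_mod_cast hp2) (hdc _ _)
  have c3 : (P3.ncard:ℝ) ≤ R := le_trans (by exact_mod_cast hp3) (hdc _ _)
  have c4 : (P4.ncard:ℝ) ≤ R := le_trans (by exact_mod_cast hp4) (hdc _ _)
  have hPR : (P.ncard:ℝ) ≤ 4*R := by
    have hcast : (P.ncard:ℝ) ≤ (P1.ncard:ℝ)+(P2.ncard:ℝ)+(P3.ncard:ℝ)+(P4.ncard:ℝ) := by
      exact_mod_cast hn1
    linarith
  -- now bound R
  have hL : 2 + (Nat.log 2 ⌊2*M⌋₊:ℝ) ≤ cc*(2*M)^δ :=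
    log_interval_bound δ cc hδ0 hcc2 hccb (2*M) (by linarith)
  have hb1 : (1:ℝ) ≤ 2 + (Nat.log 2 ⌊2*M⌋₊:ℝ) := by
    have : (0:ℝ) ≤ (Nat.log 2 ⌊2*M⌋₊:ℝ) := Nat.cast_nonneg _
    linarith
  have hfac1 : ((2 + (Nat.log 2 ⌊2*M⌋₊:ℝ))^(scnt B₀ n) : ℝ) ≤ cc^K * (2*M)^ε' := by
    calc ((2 + (Nat.log 2 ⌊2*M⌋₊:ℝ))^(scnt B₀ n) : ℝ)
        ≤ (2 + (Nat.log 2 ⌊2*M⌋₊:ℝ))^K := pow_le_pow_right₀ hb1 (by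
          have := scnt_le B₀ n
          omega)
    _ ≤ (cc*(2*M)^δ)^K := pow_le_pow_left₀ (by linarith) hL K
    _ = cc^K * ((2*M)^δ)^K := mul_pow _ _ _
    _ = cc^K * (2*M)^ε' := by
        congr 1
        rw [← Real.rpow_natCast ((2*M)^δ) K, ← Real.rpow_mul hM0]
        congr 1
        rw [hδdef]
        field_simp
  have hfac3 : ((2*M):ℝ)^ε' ≤ 2*M^ε' := by
    calc ((2*M):ℝ)^ε' = 2^ε' * M^ε' := Real.mul_rpow (by norm_num) (by linarith)
    _ ≤ 2*M^ε' := by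
        apply mul_le_mul_of_nonneg_right _ (by positivity)
        calc (2:ℝ)^ε' ≤ 2^(1:ℝ) := Real.rpow_le_rpow_of_exponent_le (by norm_num) hε'1
        _ = 2 := Real.rpow_one _
  have hfac2 : ((2*M)*(2*N)+2)^ε' ≤ 6*(M^ε' * N^ε') := by
    have h1 : (2*M)*(2*N)+2 ≤ 6*(M*N) := by nlinarith
    calc ((2*M)*(2*N)+2)^ε' ≤ (6*(M*N))^ε' :=
          Real.rpow_le_rpow (by positivity) h1 hε'0.le
    _ = 6^ε' * (M*N)^ε' := Real.mul_rpow (by norm_num) (by positivity)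
    _ = 6^ε' * (M^ε' * N^ε') := by rw [Real.mul_rpow (by linarith) (by linarith)]
    _ ≤ 6 * (M^ε' * N^ε') := by
        apply mul_le_mul_of_nonneg_right _ (by positivity)
        calc (6:ℝ)^ε' ≤ 6^(1:ℝ) := Real.rpow_le_rpow_of_exponent_le (by norm_num) hε'1
        _ = 6 := Real.rpow_one _
  have hR : R ≤ 24 * cc^K * ((M^ε' * M^ε') * N^ε') := by
    calc R ≤ (cc^K * (2*M^ε')) * (2*(6*(M^ε' * N^ε'))) := by
          apply mul_le_mul
          · exact le_trans hfac1 (mul_le_mul_of_nonneg_left hfac3 (by positivity))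
          · apply mul_le_mul_of_nonneg_left hfac2 (by norm_num)
          · positivity
          · positivity
    _ = 24 * cc^K * ((M^ε' * M^ε') * N^ε') := by ring
  have hMM : M^ε' * M^ε' = M^(ε'+ε') := (Real.rpow_add (by linarith) _ _).symm
  have hMε : M^(ε'+ε') ≤ M^ε := Real.rpow_le_rpow_of_exponent_le hM h2ε'
  have hNε : N^ε' ≤ N^ε := Real.rpow_le_rpow_of_exponent_le hN hε'ε
  have hfinal : 4*R ≤ 96 * cc^K * M^ε * N^ε := by
    have h1 : R ≤ 24 * cc^K * (M^ε * N^ε) := by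
      have h2 : (M^ε' * M^ε') * N^ε' ≤ M^ε * N^ε := by
        rw [hMM]
        apply mul_le_mul hMε hNε (by positivity) (by positivity)
      calc R ≤ 24 * cc^K * ((M^ε' * M^ε') * N^ε') := hR
      _ ≤ 24 * cc^K * (M^ε * N^ε) := by
          apply mul_le_mul_of_nonneg_left h2 (by positivity)
    nlinarith [h1]
  calc (P.ncard:ℝ) ≤ 4*R := hPR
  _ ≤ 96 * cc^K * M^ε * N^ε := by
      have := hfinal
      nlinarith [this]
end

section
/- For every ε > 0 there exists C_ε > 0 with the following property. For all dyadic N, N₁, N₂, N₃ ≥ 1, all m ∈ ℤ, and every fixed pair (n, n₂) ∈ (ℤ²)², the number of pairs (n₁, n₃) with (n, n₁, n₂, n₃) ∈ S^{𝐍,(m)} is at most C_ε · (min(N₁, N₃))^ε, uniformly in n, n₂, and m. -/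
/-- Euclidean norm of a lattice point in `ℤ²`. -/
noncomputable def znorm (n : ℤ × ℤ) : ℝ := Real.sqrt ((n.1 : ℝ) ^ 2 + (n.2 : ℝ) ^ 2)

/-- Squared Euclidean norm `|n|²` of `n ∈ ℤ²`, as an integer. -/
def nsq (n : ℤ × ℤ) : ℤ := n.1 ^ 2 + n.2 ^ 2

/-- `φ(n̄) = |n|² − |n₁|² + |n₂|² − |n₃|²`. -/
def phiFn (n n₁ n₂ n₃ : ℤ × ℤ) : ℤ := nsq n - nsq n₁ + nsq n₂ - nsq n₃

/-- `N` is a dyadic number: `N = 2^k` for some integer `k ≥ 0`. -/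
def IsDyadic (N : ℝ) : Prop := ∃ k : ℕ, N = 2 ^ k

/-- `|n| ∼ N`: for dyadic `N ≥ 2` this means `N/2 < |n| ≤ N`; for `N = 1` it means `|n| ≤ 1`. -/
def simDyadic (N : ℝ) (n : ℤ × ℤ) : Prop :=
  (N = 1 ∧ znorm n ≤ 1) ∨ (N ≠ 1 ∧ N / 2 < znorm n ∧ znorm n ≤ N)

/-- Membership in the set `S^{𝐍,(m)}`. -/
def SMem (N N₁ N₂ N₃ : ℝ) (m : ℤ) (n n₁ n₂ n₃ : ℤ × ℤ) : Prop :=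
  n = n₁ - n₂ + n₃ ∧ n ≠ n₁ ∧ n ≠ n₃ ∧ phiFn n n₁ n₂ n₃ = m ∧
    simDyadic N n ∧ simDyadic N₁ n₁ ∧ simDyadic N₂ n₂ ∧ simDyadic N₃ n₃ 

set_option linter.unreachableTactic false
set_option linter.unusedTactic false
set_option maxHeartbeats 1000000



lemma nsq_nonneg (x : ℤ × ℤ) : 0 ≤ nsq x := by unfold nsq; positivity

lemma nsq_pos {x : ℤ × ℤ} (hx : x ≠ 0) : 0 < nsq x := by
  rcases lt_or_eq_of_le (nsq_nonneg x) with h | h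
  · exact h
  · exfalso; apply hx
    have h1 : x.1 ^ 2 + x.2 ^ 2 = 0 := h.symm
    have : x.1 = 0 ∧ x.2 = 0 := by constructor <;> nlinarith [sq_nonneg x.1, sq_nonneg x.2]
    exact Prod.ext this.1 this.2

lemma three_point {p q r : ℤ × ℤ} {R : ℤ} (hp : nsq p = R) (hq : nsq q = R) (hr : nsq r = R)
    (hpq : p ≠ q) (hqr : q ≠ r) (hpr : p ≠ r) :
    4 * R ≤ nsq (q - p) * nsq (r - p) * nsq (r - q) := by
  obtain ⟨p1, p2⟩ := p
  obtain ⟨q1, q2⟩ := q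
  obtain ⟨r1, r2⟩ := r
  have hq' : q1 ^ 2 + q2 ^ 2 = p1 ^ 2 + p2 ^ 2 := by
    have := hq.trans hp.symm; simpa [nsq] using this
  have hr' : r1 ^ 2 + r2 ^ 2 = p1 ^ 2 + p2 ^ 2 := by
    have := hr.trans hp.symm; simpa [nsq] using this
  set det : ℤ := (q1 - p1) * (r2 - p2) - (q2 - p2) * (r1 - p1) with hdet
  have key : nsq ((q1, q2) - (p1, p2)) * nsq ((r1, r2) - (p1, p2)) * nsq ((r1, r2) - (q1, q2))
      = 4 * (p1 ^ 2 + p2 ^ 2) * det ^ 2 := by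
    simp only [nsq, Prod.mk_sub_mk, hdet]
    linear_combination
      ((1)*r2^4 + (2)*r1^2*r2^2 + (1)*r1^4 + (-2)*q2*r2^3 + (-2)*q2*r1^2*r2 + (1)*q2^2*r2^2 + (1)*q2^2*r1^2 + (-2)*q1*r1*r2^2 + (-2)*q1*r1^3 + (1)*q1^2*r2^2 + (1)*q1^2*r1^2 + (-2)*p2*r2^3 + (-2)*p2*r1^2*r2 + (2)*p2*q2*r2^2 + (-2)*p2*q2*r1^2 + (-2)*p2*q2^2*r2 + (4)*p2*q1*r1*r2 + (-2)*p2*q1^2*r2 + (-1)*p2^2*r2^2 + (3)*p2^2*r1^2 + (2)*p2^2*q2*r2 + (1)*p2^2*q2^2 + (-2)*p2^2*q1*r1 + (1)*p2^2*q1^2 + (4)*p2^3*r2 + (-2)*p2^3*q2 + (-2)*p2^4 + (2)*p1*r1*r2^2 + (2)*p1*r1^3 + (4)*p1*q2*r1*r2 + (-2)*p1*q2^2*r1 + (-2)*p1*q1*r2^2 + (2)*p1*q1*r1^2 + (-2)*p1*q1^2*r1 + (-8)*p1*p2*r1*r2 + (4)*p1*p2*q2*r1 + (4)*p1*p2*q1*r2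 + (-2)*p1*p2^2*q1 + (-1)*p1^2*r2^2 + (-5)*p1^2*r1^2 + (-2)*p1^2*q2*r2 + (1)*p1^2*q2^2 + (2)*p1^2*q1*r1 + (1)*p1^2*q1^2 + (4)*p1^2*p2*r2 + (-2)*p1^2*p2*q2 + (-2)*p1^3*q1 + (2)*p1^4) * hq' +
      ((-2)*p2*q2*r2^2 + (-2)*p2*q2*r1^2 + (4)*p2*q2^2*r2 + (4)*p2*q1*q2*r1 + (2)*p2^2*r2^2 + (2)*p2^2*r1^2 + (-4)*p2^2*q2^2 + (-4)*p2^2*q1*r1 + (-4)*p2^3*r2 + (2)*p2^3*q2 + (2)*p2^4 + (-4)*p1*q2^2*r1 + (-2)*p1*q1*r2^2 + (-2)*p1*q1*r1^2 + (4)*p1*q1*q2*r2 + (4)*p1*p2*q2*r1 + (4)*p1*p2*q1*r2 + (-8)*p1*p2*q1*q2 + (2)*p1*p2^2*q1 + (2)*p1^2*r2^2 + (2)*p1^2*r1^2 + (-4)*p1^2*q2*r2 + (4)*p1^2*q2^2 + (-4)*p1^2*p2*r2 + (2)*p1^2*p2*q2 + (2)*p1^3*q1 + (-2)*p1^4) *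 hr'
  have h1 : 0 < nsq ((q1, q2) - (p1, p2)) := nsq_pos (sub_ne_zero.mpr (Ne.symm hpq))
  have h2 : 0 < nsq ((r1, r2) - (p1, p2)) := nsq_pos (sub_ne_zero.mpr (Ne.symm hpr))
  have h3 : 0 < nsq ((r1, r2) - (q1, q2)) := nsq_pos (sub_ne_zero.mpr (Ne.symm hqr))
  have hdet0 : det ≠ 0 := by
    intro h0
    rw [h0] at key
    have : nsq ((q1, q2) - (p1, p2)) * nsq ((r1, r2) - (p1, p2)) * nsq ((r1, r2) - (q1, q2)) = 0 := by
      rw [key]; ring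
    exact absurd this (mul_pos (mul_pos h1 h2) h3).ne'
  have hdet1 : 1 ≤ det ^ 2 := by
    rcases hdet0.lt_or_gt with h | h <;> nlinarith
  have hR : R = p1 ^ 2 + p2 ^ 2 := by rw [← hp]; rfl
  rw [key, hR]
  nlinarith [sq_nonneg p1, sq_nonneg p2]



open GaussianInt in
/-- Gaussian integers with given norm. -/
def Zset (n : ℤ) : Set GaussianInt := {z | Zsqrtd.norm z = n}

def circ (R : ℤ) : Set (ℤ × ℤ) := {x | nsq x = R}

lemma circ_finite (R : ℤ) : (circ R).Finite := by
  apply Set.Finite.subset (Set.finite_Icc ((-R, -R) : ℤ × ℤ) (R, R))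
  intro x hx
  have h : x.1 ^ 2 + x.2 ^ 2 = R := hx
  have h1 : x.1 ^ 2 ≤ R := by nlinarith [sq_nonneg x.2]
  have h2 : x.2 ^ 2 ≤ R := by nlinarith [sq_nonneg x.1]
  constructor
  · constructor <;> simp only [Prod.fst, Prod.snd] <;> nlinarith
  · constructor <;> simp only [Prod.fst, Prod.snd] <;> nlinarith

lemma Zset_finite (n : ℤ) : (Zset n).Finite := by
  have : Zset n = (fun z : GaussianInt => ((z.re, z.im) : ℤ × ℤ)) ⁻¹' (circ n) := by
    ext z
    simp only [Zset, circ, Set.mem_setOf_eq, Set.mem_preimage]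
    rw [Zsqrtd.norm_def]; simp [nsq]; ring_nf
  rw [this]
  apply Set.Finite.preimage _ (circ_finite n)
  intro a _ b _ hab
  simp only [Prod.mk.injEq] at hab
  exact Zsqrtd.ext hab.1 hab.2

lemma ncard_circ_le_Zset (R : ℤ) : (circ R).ncard ≤ (Zset R).ncard := by
  refine Set.ncard_le_ncard_of_injOn (fun x : ℤ × ℤ => (⟨x.1, x.2⟩ : GaussianInt)) ?_ ?_
    (Zset_finite R)
  · intro x hx
    have h : x.1 ^ 2 + x.2 ^ 2 = R := hx
    show Zsqrtd.norm _ = R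
    rw [Zsqrtd.norm_def]
    ring_nf
    linarith [h]
  · intro a _ b _ hab
    have h1 := congrArg Zsqrtd.re hab
    have h2 := congrArg Zsqrtd.im hab
    exact Prod.ext h1 h2

set_option synthInstance.maxHeartbeats 1000000 in
lemma gi_prime_of_norm (π : GaussianInt) (hpn : Prime (Zsqrtd.norm π)) : Prime π := by
  rw [← irreducible_iff_prime]
  constructor
  · intro hu
    rw [← Zsqrtd.norm_eq_one_iff' (by norm_num) π] at hu
    rw [hu] at hpn
    exact hpn.ne_one rfl
  · intro a b hab
    have hn : Zsqrtd.norm π = Zsqrtd.norm a * Zsqrtd.norm b := by rw [hab, Zsqrtd.norm_mul]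
    rcases hpn.irreducible.isUnit_or_isUnit hn with h | h
    · left
      rw [← Zsqrtd.norm_eq_one_iff]
      exact Int.isUnit_iff_natAbs_eq.mp h
    · right
      rw [← Zsqrtd.norm_eq_one_iff]
      exact Int.isUnit_iff_natAbs_eq.mp h

lemma gi_ne_zero_of_norm {π : GaussianInt} {n : ℤ} (hn : Zsqrtd.norm π = n) (h0 : n ≠ 0) :
    π ≠ 0 := by
  intro h
  rw [h, Zsqrtd.norm_zero] at hn
  exact h0 hn.symm

/-- generic descent: divide everything in `s` by `π` landing in `t`. -/
lemma descend {π : GaussianInt} (hπ0 : π ≠ 0) {s t : Set GaussianInt}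
    (hs : ∀ z ∈ s, π ∣ z ∧ z / π ∈ t) (ht : t.Finite) : s.ncard ≤ t.ncard := by
  apply Set.ncard_le_ncard_of_injOn (fun z => z / π) (fun z hz => (hs z hz).2) _ ht
  intro z1 h1 z2 h2 he
  have e1 := EuclideanDomain.mul_div_cancel' hπ0 (hs z1 h1).1
  have e2 := EuclideanDomain.mul_div_cancel' hπ0 (hs z2 h2).1
  rw [← e1, ← e2]
  simp only at he
  rw [he]

lemma star_dvd_of_dvd_star {π z : GaussianInt} (h : π ∣ star z) : star π ∣ z := by
  obtain ⟨c, hc⟩ := h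
  refine ⟨star c, ?_⟩
  have := congrArg star hc
  rwa [star_star, star_mul, mul_comm] at this

lemma quot_norm {π z : GaussianInt} {a b : ℤ} (hπn : Zsqrtd.norm π = a) (ha : a ≠ 0)
    (hz : Zsqrtd.norm z = a * b) (hdvd : π ∣ z) : Zsqrtd.norm (z / π) = b := by
  have hπ0 : π ≠ 0 := gi_ne_zero_of_norm hπn ha
  have e := EuclideanDomain.mul_div_cancel' hπ0 hdvd
  have h : Zsqrtd.norm π * Zsqrtd.norm (z / π) = a * b := by
    rw [← Zsqrtd.norm_mul, e, hz]
  rw [hπn] at h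
  exact mul_left_cancel₀ ha h

lemma dvd_or_star_dvd {π z : GaussianInt} {p b : ℤ} (hπn : Zsqrtd.norm π = p)
    (hπ : Prime π) (hz : Zsqrtd.norm z = p * b) : π ∣ z ∨ star π ∣ z := by
  have h1 : ((Zsqrtd.norm z : ℤ) : GaussianInt) = z * star z := Zsqrtd.norm_eq_mul_conj z
  have hps : π * star π = ((p : ℤ) : GaussianInt) := by
    rw [← hπn]; exact (Zsqrtd.norm_eq_mul_conj π).symm
  have h2 : π ∣ z * star z := by
    rw [← h1, hz]
    push_cast
    rw [← hps]
    exact Dvd.dvd.mul_right (dvd_mul_right π (star π)) _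
  rcases hπ.2.2 _ _ h2 with h | h
  · exact Or.inl h
  · exact Or.inr (star_dvd_of_dvd_star h)

lemma sπ_ne_zero {π : GaussianInt} {p : ℤ} (hπn : Zsqrtd.norm π = p) (hp : p ≠ 0) :
    star π ≠ 0 :=
  gi_ne_zero_of_norm (by rw [Zsqrtd.norm_conj, hπn]) hp

lemma C1 (p m : ℕ) (hp2 : 2 ≤ p) {π : GaussianInt} (hπn : Zsqrtd.norm π = (p : ℤ))
    (hπ : Prime π) (j : ℕ) :
    ({z : GaussianInt | Zsqrtd.norm z = ((p ^ j * m : ℕ) : ℤ) ∧ ¬ π ∣ z}).ncard ≤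
      ({z : GaussianInt | Zsqrtd.norm z = ((m : ℕ) : ℤ) ∧ ¬ π ∣ z}).ncard := by
  have hp0 : (p : ℤ) ≠ 0 := by positivity
  have hsπ0 : star π ≠ 0 := sπ_ne_zero hπn hp0
  induction j with
  | zero => simp
  | succ j ih =>
    refine le_trans (descend hsπ0 ?_ ?_) ih
    · intro z hz
      obtain ⟨hzn, hnd⟩ := hz
      have hcast : Zsqrtd.norm z = (p : ℤ) * ((p ^ j * m : ℕ) : ℤ) := by
        rw [hzn]; push_cast; ring
      have hdvd : star π ∣ z := by
        rcases dvd_or_star_dvd hπn hπ hcast with h | h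
        · exact absurd h hnd
        · exact h
      refine ⟨hdvd, ?_, ?_⟩
      · exact quot_norm (by rw [Zsqrtd.norm_conj, hπn]) hp0 hcast hdvd
      · intro hcon
        apply hnd
        have e := EuclideanDomain.mul_div_cancel' hsπ0 hdvd
        exact e ▸ Dvd.dvd.mul_left hcon (star π)
    · exact Set.Finite.subset (Zset_finite ((p ^ j * m : ℕ) : ℤ)) (fun z hz => hz.1)

lemma C2 (p m : ℕ) (hp2 : 2 ≤ p) {π : GaussianInt} (hπn : Zsqrtd.norm π = (p : ℤ))
    (hπ : Prime π) (j : ℕ) :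
    (Zset ((p ^ j * m : ℕ) : ℤ)).ncard ≤ (j + 1) * (Zset ((m : ℕ) : ℤ)).ncard := by
  have hp0 : (p : ℤ) ≠ 0 := by positivity
  have hπ0 : π ≠ 0 := gi_ne_zero_of_norm hπn hp0
  have hsπ0 : star π ≠ 0 := sπ_ne_zero hπn hp0
  induction j with
  | zero => simp [Zset]
  | succ j ih =>
    set X : ℤ := ((p ^ (j + 1) * m : ℕ) : ℤ) with hX
    have hcast : ∀ z : GaussianInt, Zsqrtd.norm z = X →
        Zsqrtd.norm z = (p : ℤ) * ((p ^ j * m : ℕ) : ℤ) := by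
      intro z hz; rw [hz, hX]; push_cast; ring
    have hunion : Zset X ⊆ {z : GaussianInt | Zsqrtd.norm z = X ∧ π ∣ z} ∪
        {z : GaussianInt | Zsqrtd.norm z = X ∧ ¬ π ∣ z} := by
      intro z hz
      by_cases h : π ∣ z
      · exact Or.inl ⟨hz, h⟩
      · exact Or.inr ⟨hz, h⟩
    have hfinA : ({z : GaussianInt | Zsqrtd.norm z = X ∧ π ∣ z}).Finite :=
      Set.Finite.subset (Zset_finite X) (fun z hz => hz.1)
    have hfinB : ({z : GaussianInt | Zsqrtd.norm z = X ∧ ¬ π ∣ z}).Finite :=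
      Set.Finite.subset (Zset_finite X) (fun z hz => hz.1)
    have hA : ({z : GaussianInt | Zsqrtd.norm z = X ∧ π ∣ z}).ncard ≤
        (Zset ((p ^ j * m : ℕ) : ℤ)).ncard := by
      refine descend hπ0 ?_ (Zset_finite _)
      intro z hz
      obtain ⟨hzn, hdvd⟩ := hz
      exact ⟨hdvd, quot_norm hπn hp0 (hcast z hzn) hdvd⟩
    have hB : ({z : GaussianInt | Zsqrtd.norm z = X ∧ ¬ π ∣ z}).ncard ≤
        (Zset ((m : ℕ) : ℤ)).ncard := by
      refine le_trans (C1 p m hp2 hπn hπ (j+1)) ?_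
      exact Set.ncard_le_ncard (fun z hz => hz.1)
        (Zset_finite ((m : ℕ) : ℤ))
    calc (Zset X).ncard ≤ ({z : GaussianInt | Zsqrtd.norm z = X ∧ π ∣ z} ∪
          {z : GaussianInt | Zsqrtd.norm z = X ∧ ¬ π ∣ z}).ncard :=
        Set.ncard_le_ncard hunion (Set.Finite.union hfinA hfinB)
      _ ≤ ({z : GaussianInt | Zsqrtd.norm z = X ∧ π ∣ z}).ncard +
          ({z : GaussianInt | Zsqrtd.norm z = X ∧ ¬ π ∣ z}).ncard :=
        Set.ncard_union_le _ _
      _ ≤ (j + 1) * (Zset ((m : ℕ) : ℤ)).ncard + (Zset ((m : ℕ) : ℤ)).ncard := by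
        exact Nat.add_le_add (le_trans hA ih) hB
      _ = (j + 1 + 1) * (Zset ((m : ℕ) : ℤ)).ncard := by ring

lemma Zset_one_le : (Zset 1).ncard ≤ 4 := by
  have hsub : Zset 1 ⊆ {(⟨1, 0⟩ : GaussianInt), ⟨-1, 0⟩, ⟨0, 1⟩, ⟨0, -1⟩} := by
    rintro ⟨a, b⟩ hz
    have h : a * a + b * b = 1 := by
      have := hz
      simp only [Zset, Set.mem_setOf_eq, Zsqrtd.norm_def] at this
      linarith [this]
    have ha : -1 ≤ a ∧ a ≤ 1 := by constructor <;> nlinarith [mul_self_nonneg b, mul_self_nonneg a]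
    have hb : -1 ≤ b ∧ b ≤ 1 := by constructor <;> nlinarith [mul_self_nonneg b, mul_self_nonneg a]
    obtain ⟨ha1, ha2⟩ := ha
    obtain ⟨hb1, hb2⟩ := hb
    interval_cases a <;> interval_cases b <;> simp_all <;> omega
  refine le_trans (Set.ncard_le_ncard hsub (by
    exact (((Set.finite_singleton _).insert _).insert _).insert _)) ?_
  refine le_trans (Set.ncard_insert_le _ _) ?_
  have h2 : (({⟨-1, 0⟩, ⟨0, 1⟩, ⟨0, -1⟩} : Set GaussianInt)).ncard ≤ 3 := by
    refine le_trans (Set.ncard_insert_le _ _) ?_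
    have h3 : (({⟨0, 1⟩, ⟨0, -1⟩} : Set GaussianInt)).ncard ≤ 2 := by
      refine le_trans (Set.ncard_insert_le _ _) ?_
      simp [Set.ncard_singleton]
    omega
  omega

lemma gi_count : ∀ R : ℕ, 1 ≤ R → (Zset (R : ℤ)).ncard ≤ 4 * R.divisors.card := by
  intro R
  induction R using Nat.strong_induction_on with
  | _ R ih =>
  intro hR
  rcases eq_or_lt_of_le hR with h1 | h2
  · rw [← h1]
    simpa [Nat.divisors_one] using Zset_one_le
  · -- R ≥ 2
    have hp : R.minFac.Prime := Nat.minFac_prime (by omega)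
    set p := R.minFac with hpdef
    have hpR : p ∣ R := Nat.minFac_dvd R
    have hR0 : R ≠ 0 := by omega
    have hp2 : 2 ≤ p := hp.two_le
    rcases Nat.lt_or_ge p 3 with hp3 | hp3
    · -- p = 2 case
      have hpeq : p = 2 := by omega
      set π : GaussianInt := ⟨1, 1⟩ with hπdef
      have hπn : Zsqrtd.norm π = (2 : ℤ) := by simp [Zsqrtd.norm_def, hπdef]
      have hπ : Prime π := gi_prime_of_norm π (by rw [hπn]; exact Int.prime_two)
      have hπ0 : π ≠ 0 := gi_ne_zero_of_norm hπn (by norm_num)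
      have hdvd2 : 2 ∣ R := hpeq ▸ hpR
      have hR2 : R = 2 * (R / 2) := (Nat.two_mul_div_two_of_even (even_iff_two_dvd.mpr hdvd2)).symm
      have hcast : ∀ z : GaussianInt, z ∈ Zset (R : ℤ) →
          Zsqrtd.norm z = (2 : ℤ) * ((R / 2 : ℕ) : ℤ) := by
        intro z hz
        rw [hz]
        rw [hR2]
        push_cast [Nat.mul_div_cancel_left _ (by norm_num : 0 < 2)]
        ring
      have hstep : (Zset (R : ℤ)).ncard ≤ (Zset ((R / 2 : ℕ) : ℤ)).ncard := by
        refine descend hπ0 ?_ (Zset_finite _)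
        intro z hz
        have hzn := hcast z hz
        have hdvd : π ∣ z := by
          rcases dvd_or_star_dvd hπn hπ hzn with h | h
          · exact h
          · -- π ∣ star π
            have hps : star π = π * ⟨0, -1⟩ := by
              ext <;> simp [hπdef, Zsqrtd.re_star, Zsqrtd.im_star, Zsqrtd.re_mul, Zsqrtd.im_mul]
            exact dvd_trans (Dvd.intro _ hps.symm) h
        exact ⟨hdvd, quot_norm hπn (by norm_num) hzn hdvd⟩
      have hhalf1 : 1 ≤ R / 2 := Nat.one_le_div_iff (by norm_num) |>.mpr (by omega)
      have hhalfR : R / 2 < R := Nat.div_lt_self (by omega) (by norm_num)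
      refine le_trans hstep (le_trans (ih (R / 2) hhalfR hhalf1) ?_)
      have : (R / 2).divisors ⊆ R.divisors :=
        Nat.divisors_subset_of_dvd hR0 (Nat.div_dvd_of_dvd hdvd2)
      exact Nat.mul_le_mul_left 4 (Finset.card_le_card this)
    · -- p odd
      have hodd : p % 2 = 1 := by
        rcases Nat.Prime.eq_two_or_odd hp with h | h
        · omega
        · exact h
      rcases Nat.lt_or_ge (p % 4) 2 with hm4 | hm4
      · -- p % 4 = 1 case
        have hp41 : p % 4 = 1 := by omega
        haveI : Fact p.Prime := ⟨hp⟩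
        obtain ⟨a, b, hab⟩ := Nat.Prime.sq_add_sq (p := p) (by omega)
        set π : GaussianInt := ⟨(a : ℤ), (b : ℤ)⟩ with hπdef
        have hπn : Zsqrtd.norm π = (p : ℤ) := by
          simp only [Zsqrtd.norm_def, hπdef]
          push_cast [← hab]
          ring
        have hpp : Prime ((p : ℕ) : ℤ) := Int.prime_iff_natAbs_prime.mpr (by simpa using hp)
        have hπ : Prime π := gi_prime_of_norm π (by rw [hπn]; exact hpp)
        set k := R.factorization p with hkdef
        have hk1 : 1 ≤ k := hp.factorization_pos_of_dvd hR0 hpR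
        set m := R / p ^ k with hmdef
        have hRk : p ^ k * m = R := Nat.ordProj_mul_ordCompl_eq_self R p
        have hpm : ¬ p ∣ m := Nat.not_dvd_ordCompl hp hR0
        have hm1 : 1 ≤ m := Nat.pos_of_ne_zero (by intro h; rw [h, mul_zero] at hRk; omega)
        have hmR : m < R := by
          have h2pk : 2 ≤ p ^ k := le_trans hp2 (Nat.le_self_pow (by omega) p)
          calc m = R / p ^ k := hmdef
            _ < R := Nat.div_lt_self (by omega) (by omega)
        have hc2 := C2 p m hp2 hπn hπ k
        rw [hRk] at hc2
        have hdm : 4 * ((k + 1) * m.divisors.card) = 4 * R.divisors.card := by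
          congr 1
          have hcop : Nat.Coprime (p ^ k) m := Nat.Coprime.pow_left k
            ((hp.coprime_iff_not_dvd).mpr hpm)
          rw [← hRk, Nat.Coprime.card_divisors_mul hcop]
          congr 1
          rw [Nat.divisors_prime_pow hp, Finset.card_map, Finset.card_range]
        calc (Zset (R : ℤ)).ncard ≤ (k + 1) * (Zset ((m : ℕ) : ℤ)).ncard := hc2
          _ ≤ (k + 1) * (4 * m.divisors.card) :=
            Nat.mul_le_mul_left _ (ih m hmR hm1)
          _ = 4 * ((k + 1) * m.divisors.card) := by ring
          _ = 4 * R.divisors.card := hdm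
      · -- p % 4 = 3 case
        have hp43 : p % 4 = 3 := by omega
        haveI : Fact p.Prime := ⟨hp⟩
        have hprime : Prime ((p : ℕ) : GaussianInt) := by
          rw [GaussianInt.prime_iff_mod_four_eq_three_of_nat_prime p]
          exact hp43
        rcases Set.eq_empty_or_nonempty (Zset (R : ℤ)) with hemp | ⟨z0, hz0⟩
        · rw [hemp]; simp
        · -- establish p ∣ z for all z, and p^2 ∣ R
          have hdvd_all : ∀ z ∈ Zset (R : ℤ), ((p : ℕ) : GaussianInt) ∣ z := by
            intro z hz
            have h1 : ((Zsqrtd.norm z : ℤ) : GaussianInt) = z * star z :=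
              Zsqrtd.norm_eq_mul_conj z
            have h2 : ((p : ℕ) : GaussianInt) ∣ z * star z := by
              rw [← h1, hz]
              obtain ⟨c, hc⟩ := hpR
              rw [hc]
              push_cast
              exact Dvd.dvd.mul_right (dvd_refl _) _
            rcases hprime.2.2 _ _ h2 with h | h
            · exact h
            · have : star ((p : ℕ) : GaussianInt) ∣ z := star_dvd_of_dvd_star h
              rwa [star_natCast] at this
          have hnormp : Zsqrtd.norm ((p : ℕ) : GaussianInt) = ((p : ℤ))^2 := by
            rw [Zsqrtd.norm_natCast]; ring
          -- p^2 ∣ R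
          have hp2R : (p^2 : ℕ) ∣ R := by
            obtain ⟨w, hw⟩ := hdvd_all z0 hz0
            have hnw : (R : ℤ) = (p:ℤ)^2 * Zsqrtd.norm w := by
              rw [← hz0, hw, Zsqrtd.norm_mul, hnormp]
            have hwnn : 0 ≤ Zsqrtd.norm w := Zsqrtd.norm_nonneg (by norm_num) w
            have : ((p^2 : ℕ) : ℤ) ∣ (R : ℤ) := ⟨Zsqrtd.norm w, by push_cast; linarith [hnw]⟩
            exact_mod_cast Int.ofNat_dvd.mp (by exact_mod_cast this)
          set R' := R / p^2 with hR'def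
          have hRR' : R = p^2 * R' := (Nat.mul_div_cancel' hp2R).symm
          have hcast : ∀ z : GaussianInt, z ∈ Zset (R : ℤ) →
              Zsqrtd.norm z = ((p : ℤ))^2 * ((R' : ℕ) : ℤ) := by
            intro z hz
            rw [hz, hRR']
            push_cast
            ring
          have hstep : (Zset (R : ℤ)).ncard ≤ (Zset ((R' : ℕ) : ℤ)).ncard := by
            refine descend (gi_ne_zero_of_norm hnormp (by positivity)) ?_ (Zset_finite _)
            intro z hz
            exact ⟨hdvd_all z hz, quot_norm hnormp (by positivity) (hcast z hz) (hdvd_all z hz)⟩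
          have hR'1 : 1 ≤ R' := Nat.pos_of_ne_zero (by intro h; rw [h, mul_zero] at hRR'; omega)
          refine le_trans hstep (le_trans (ih R' ?_ hR'1) ?_)
          · rw [hR'def]
            exact Nat.div_lt_self (by omega) (by nlinarith)
          · have : R'.divisors ⊆ R.divisors :=
              Nat.divisors_subset_of_dvd hR0 ⟨p^2, by rw [hRR', mul_comm]⟩
            exact Nat.mul_le_mul_left 4 (Finset.card_le_card this)


open Real in
lemma key_pow_bound (δ : ℝ) (hδ : 0 < δ) (k : ℕ) :
    (k + 1 : ℝ) ≤ (max 1 (1 / (δ * Real.log 2))) * (2 : ℝ) ^ ((k : ℝ) * δ) := by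
  set C₀ : ℝ := max 1 (1 / (δ * Real.log 2)) with hC₀
  have hlog2 : 0 < Real.log 2 := Real.log_pos (by norm_num)
  have h1 : 1 ≤ C₀ := le_max_left _ _
  have h2 : 1 ≤ C₀ * (δ * Real.log 2) := by
    have : 1 / (δ * Real.log 2) ≤ C₀ := le_max_right _ _
    have hpos : 0 < δ * Real.log 2 := by positivity
    calc (1:ℝ) = (1 / (δ * Real.log 2)) * (δ * Real.log 2) := by field_simp
      _ ≤ C₀ * (δ * Real.log 2) := by
        apply mul_le_mul_of_nonneg_right this (le_of_lt hpos)
  have hexp : (2 : ℝ) ^ ((k : ℝ) * δ) = Real.exp (Real.log 2 * ((k : ℝ) * δ)) :=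
    Real.rpow_def_of_pos (by norm_num) _
  have hlb : 1 + (k : ℝ) * δ * Real.log 2 ≤ (2 : ℝ) ^ ((k : ℝ) * δ) := by
    rw [hexp]
    have := Real.add_one_le_exp (Real.log 2 * ((k : ℝ) * δ))
    nlinarith [this]
  have hk0 : (0:ℝ) ≤ (k : ℝ) := Nat.cast_nonneg k
  nlinarith [mul_le_mul_of_nonneg_left hlb (le_trans zero_le_one h1)]

lemma divisor_bound (δ : ℝ) (hδ : 0 < δ) :
    ∃ C : ℝ, 1 ≤ C ∧ ∀ n : ℕ, 1 ≤ n → (n.divisors.card : ℝ) ≤ C * (n : ℝ) ^ δ := by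
  set C₀ : ℝ := max 1 (1 / (δ * Real.log 2)) with hC₀
  have hC₀1 : 1 ≤ C₀ := le_max_left _ _
  set B : ℕ := ⌈(2 : ℝ) ^ (1 / δ)⌉₊ with hB
  refine ⟨C₀ ^ (B + 1), one_le_pow₀ hC₀1, ?_⟩
  intro n hn
  have hn0 : n ≠ 0 := by omega
  have hd : (n.divisors.card : ℝ) = ∏ p ∈ n.primeFactors, ((n.factorization p : ℝ) + 1) := by
    rw [Nat.card_divisors hn0]
    push_cast
    rfl
  have hpw : ∀ p ∈ n.primeFactors, ((n.factorization p : ℝ) + 1) ≤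
      (if p ≤ B then C₀ else 1) * (p : ℝ) ^ ((n.factorization p : ℝ) * δ) := by
    intro p hp
    have hpp : p.Prime := Nat.prime_of_mem_primeFactors hp
    have hp2 : (2:ℝ) ≤ (p:ℝ) := by exact_mod_cast hpp.two_le
    set k := n.factorization p with hk
    by_cases hcase : p ≤ B
    · rw [if_pos hcase]
      refine le_trans (key_pow_bound δ hδ k) ?_
      exact mul_le_mul_of_nonneg_left
        (Real.rpow_le_rpow (by norm_num) hp2 (by positivity))
        (le_trans zero_le_one hC₀1)
    · rw [if_neg hcase, one_mul]
      have hBp : ((2:ℝ) ^ (1/δ)) ≤ (p : ℝ) := by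
        refine le_trans (Nat.le_ceil _) ?_
        exact_mod_cast Nat.le_of_lt (by omega : B < p)
      have h2p : (2:ℝ) ≤ (p:ℝ) ^ δ := by
        calc (2:ℝ) = ((2:ℝ) ^ (1/δ)) ^ δ := by
              rw [← Real.rpow_mul (by norm_num), one_div_mul_cancel (ne_of_gt hδ),
                Real.rpow_one]
          _ ≤ (p:ℝ) ^ δ := Real.rpow_le_rpow (by positivity) hBp (le_of_lt hδ)
      have hsplit : (p:ℝ) ^ ((k:ℝ) * δ) = ((p:ℝ) ^ δ) ^ (k : ℕ) := by
        rw [mul_comm, Real.rpow_mul (by positivity : (0:ℝ) ≤ (p:ℝ)), Real.rpow_natCast]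
      rw [hsplit]
      calc (k:ℝ) + 1 ≤ (2:ℝ) ^ (k:ℕ) := by exact_mod_cast Nat.lt_two_pow_self (n := k)
        _ ≤ ((p:ℝ) ^ δ) ^ (k:ℕ) := pow_le_pow_left₀ (by norm_num) h2p k
  rw [hd]
  refine le_trans (Finset.prod_le_prod (fun p _ => by positivity) hpw) ?_
  rw [Finset.prod_mul_distrib]
  have hprod2 : ∏ p ∈ n.primeFactors, (p:ℝ) ^ ((n.factorization p : ℝ) * δ) = (n:ℝ) ^ δ := by
    have hfac : ∏ p ∈ n.primeFactors, p ^ n.factorization p = n := by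
      have h := Nat.factorization_prod_pow_eq_self hn0
      rwa [Finsupp.prod, Nat.support_factorization] at h
    have heach : ∀ p ∈ n.primeFactors, (p:ℝ) ^ ((n.factorization p : ℝ) * δ) =
        (((p ^ n.factorization p : ℕ) : ℝ)) ^ δ := by
      intro p _
      push_cast
      rw [← Real.rpow_natCast ((p:ℝ)) (n.factorization p), ← Real.rpow_mul (by positivity)]
    rw [Finset.prod_congr rfl heach, Real.finset_prod_rpow _ _ (fun p _ => by positivity)]
    congr 1
    exact_mod_cast congrArg (Nat.cast (R := ℝ)) hfac
  rw [hprod2]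
  apply mul_le_mul_of_nonneg_right _ (Real.rpow_nonneg (Nat.cast_nonneg n) δ)
  rw [Finset.prod_ite _ _]
  rw [Finset.prod_const_one, mul_one, Finset.prod_const]
  have hcard : (n.primeFactors.filter (· ≤ B)).card ≤ B + 1 := by
    have hsub : n.primeFactors.filter (· ≤ B) ⊆ Finset.range (B + 1) := by
      intro x hx
      rw [Finset.mem_range]
      have := (Finset.mem_filter.mp hx).2
      omega
    calc (n.primeFactors.filter (· ≤ B)).card ≤ (Finset.range (B+1)).card :=
        Finset.card_le_card hsub
      _ = B + 1 := Finset.card_range _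
  exact pow_le_pow_right₀ hC₀1 hcard


lemma znorm_nonneg (a : ℤ × ℤ) : 0 ≤ znorm a := Real.sqrt_nonneg _

lemma znorm_sq (a : ℤ × ℤ) : znorm a ^ 2 = ((nsq a : ℤ) : ℝ) := by
  unfold znorm nsq
  rw [Real.sq_sqrt (by positivity)]
  push_cast
  ring

lemma znorm_eq_abs (a : ℤ × ℤ) : znorm a = ‖(⟨(a.1 : ℝ), (a.2 : ℝ)⟩ : ℂ)‖ := by
  rw [Complex.norm_def, Complex.normSq_mk]
  unfold znorm
  congr 1
  ring

lemma znorm_sub_le (a b : ℤ × ℤ) : znorm (a - b) ≤ znorm a + znorm b := by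
  rw [znorm_eq_abs, znorm_eq_abs, znorm_eq_abs]
  have he : (⟨((a - b).1 : ℝ), ((a - b).2 : ℝ)⟩ : ℂ) =
      (⟨(a.1 : ℝ), (a.2 : ℝ)⟩ : ℂ) - ⟨(b.1 : ℝ), (b.2 : ℝ)⟩ := by
    apply Complex.ext <;> simp [Prod.fst_sub, Prod.snd_sub] <;> push_cast <;> ring
  rw [he]
  exact norm_sub_le _ _

lemma znorm_double (a : ℤ × ℤ) : znorm (a + a) = 2 * znorm a := by
  unfold znorm
  have he : (((a + a).1 : ℝ) ^ 2 + ((a + a).2 : ℝ) ^ 2) =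
      2 ^ 2 * (((a.1 : ℝ)) ^ 2 + ((a.2 : ℝ)) ^ 2) := by
    simp only [Prod.fst_add, Prod.snd_add]
    push_cast
    ring
  rw [he, Real.sqrt_mul (by positivity), Real.sqrt_sq (by norm_num)]

lemma simDyadic_le {N : ℝ} {a : ℤ × ℤ} (h : simDyadic N a) : znorm a ≤ N := by
  rcases h with ⟨h1, h2⟩ | ⟨_, _, h3⟩
  · rw [h1]; exact h2
  · exact h3

lemma isDyadic_one_le {N : ℝ} (h : IsDyadic N) : 1 ≤ N := by
  obtain ⟨k, rfl⟩ := h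
  exact one_le_pow₀ (by norm_num)

lemma circ_bound (δ : ℝ) (hδ : 0 < δ) :
    ∃ C : ℝ, 1 ≤ C ∧ ∀ R : ℤ, 1 ≤ R → ((circ R).ncard : ℝ) ≤ C * (R : ℝ) ^ δ := by
  obtain ⟨C, hC1, hC⟩ := divisor_bound δ hδ
  refine ⟨4 * C, by linarith, ?_⟩
  intro R hR
  have hRt : ((R.toNat : ℕ) : ℤ) = R := Int.toNat_of_nonneg (by omega)
  have ht1 : 1 ≤ R.toNat := by omega
  have h1 : (circ R).ncard ≤ 4 * (R.toNat).divisors.card := by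
    calc (circ R).ncard ≤ (Zset R).ncard := ncard_circ_le_Zset R
      _ ≤ 4 * (R.toNat).divisors.card := by
          rw [← hRt]; exact gi_count R.toNat ht1
  have hcast : ((R.toNat : ℕ) : ℝ) = (R : ℝ) := by exact_mod_cast hRt
  calc ((circ R).ncard : ℝ) ≤ 4 * ((R.toNat).divisors.card : ℝ) := by exact_mod_cast h1
    _ ≤ 4 * (C * ((R.toNat : ℕ) : ℝ) ^ δ) :=
        mul_le_mul_of_nonneg_left (hC R.toNat ht1) (by norm_num)
    _ = 4 * C * ((R : ℝ)) ^ δ := by rw [hcast]; ring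

lemma cluster_bound (ε : ℝ) (hε : 0 < ε) :
    ∃ C : ℝ, 1 ≤ C ∧ ∀ (R : ℤ) (M : ℝ) (T : Set (ℤ × ℤ)), 1 ≤ M → T ⊆ circ R →
      (∀ x ∈ T, ∀ y ∈ T, ((nsq (x - y) : ℤ) : ℝ) ≤ 16 * M ^ 2) →
      (T.ncard : ℝ) ≤ C * M ^ ε := by
  obtain ⟨C₁, hC₁1, hC₁⟩ := circ_bound (ε / 6) (by positivity)
  set C : ℝ := max 2 (C₁ * 1024 ^ (ε / 6)) with hCdef
  have hC2 : (2:ℝ) ≤ C := le_max_left _ _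
  refine ⟨C, by linarith, ?_⟩
  intro R M T hM hTc hdiam
  have hM0 : (0:ℝ) ≤ M := by linarith
  have hMε : 1 ≤ M ^ ε := by
    calc (1:ℝ) = (1:ℝ) ^ ε := (Real.one_rpow ε).symm
      _ ≤ M ^ ε := Real.rpow_le_rpow (by norm_num) hM (le_of_lt hε)
  have hMε0 : (0:ℝ) ≤ M ^ ε := by linarith
  have hTfin : T.Finite := (circ_finite R).subset hTc
  by_cases hR : R ≤ 0
  · rcases T.eq_empty_or_nonempty with he | ⟨x0, hx0⟩
    · rw [he]
      simp only [Set.ncard_empty, Nat.cast_zero]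
      positivity
    · have hR0 : R = 0 := le_antisymm hR ((hTc hx0) ▸ nsq_nonneg x0)
      have hsub0 : T ⊆ {(0 : ℤ × ℤ)} := by
        intro x hx
        have := hTc hx
        rw [hR0] at this
        have hx0' : nsq x = 0 := this
        have : x = 0 := by
          by_contra hne
          exact absurd hx0' (ne_of_gt (nsq_pos hne))
        simp [this]
      have : T.ncard ≤ 1 := by
        calc T.ncard ≤ ({(0 : ℤ × ℤ)} : Set (ℤ × ℤ)).ncard :=
            Set.ncard_le_ncard hsub0 (Set.finite_singleton _)
          _ = 1 := Set.ncard_singleton _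
      calc (T.ncard : ℝ) ≤ 1 := by exact_mod_cast this
        _ ≤ C * M ^ ε := by nlinarith
  · push_neg at hR
    by_cases hbig : (4096 : ℝ) * M ^ 6 < 4 * (R : ℝ)
    · -- at most two points
      have h2 : T.ncard ≤ 2 := by
        by_contra hcon
        push_neg at hcon
        obtain ⟨T', hT'sub, hT'card⟩ := Set.exists_subset_card_eq (by omega : 3 ≤ T.ncard)
        obtain ⟨a, b, c, hab, hac, hbc, hset⟩ := Set.ncard_eq_three.mp hT'card
        have ha : a ∈ T := hT'sub (by rw [hset]; simp)
        have hb : b ∈ T := hT'sub (by rw [hset]; simp)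
        have hc : c ∈ T := hT'sub (by rw [hset]; simp)
        have h3p := three_point (hTc ha) (hTc hb) (hTc hc) hab hbc hac
        have P1 := hdiam b hb a ha
        have P2 := hdiam c hc a ha
        have P3 := hdiam c hc b hb
        have n1 : (0:ℝ) ≤ ((nsq (b - a) : ℤ) : ℝ) := by exact_mod_cast nsq_nonneg _
        have n2 : (0:ℝ) ≤ ((nsq (c - a) : ℤ) : ℝ) := by exact_mod_cast nsq_nonneg _
        have n3 : (0:ℝ) ≤ ((nsq (c - b) : ℤ) : ℝ) := by exact_mod_cast nsq_nonneg _
        have hM2 : (0:ℝ) ≤ 16 * M ^ 2 := by positivity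
        have hprod : ((nsq (b - a) : ℤ) : ℝ) * ((nsq (c - a) : ℤ) : ℝ) * ((nsq (c - b) : ℤ) : ℝ)
            ≤ (16 * M ^ 2) ^ 3 := by
          calc ((nsq (b - a) : ℤ) : ℝ) * ((nsq (c - a) : ℤ) : ℝ) * ((nsq (c - b) : ℤ) : ℝ)
              ≤ (16 * M ^ 2) * (16 * M ^ 2) * (16 * M ^ 2) :=
            mul_le_mul (mul_le_mul P1 P2 n2 hM2) P3 n3 (by positivity)
            _ = (16 * M ^ 2) ^ 3 := by ring
        have hcast : 4 * (R : ℝ) ≤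
            ((nsq (b - a) : ℤ) : ℝ) * ((nsq (c - a) : ℤ) : ℝ) * ((nsq (c - b) : ℤ) : ℝ) := by
          exact_mod_cast h3p
        have hcube : ((16:ℝ) * M ^ 2) ^ 3 = 4096 * M ^ 6 := by ring
        linarith
      calc (T.ncard : ℝ) ≤ 2 := by exact_mod_cast h2
        _ ≤ C * M ^ ε := by nlinarith
    · push_neg at hbig
      have hRle : (R : ℝ) ≤ 1024 * M ^ 6 := by linarith
      have hR0 : (0:ℝ) ≤ (R : ℝ) := by exact_mod_cast le_of_lt hR
      have hstep : ((circ R).ncard : ℝ) ≤ C₁ * (R : ℝ) ^ (ε / 6) := hC₁ R hR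
      have hrp : (R : ℝ) ^ (ε / 6) ≤ (1024 * M ^ 6) ^ (ε / 6) :=
        Real.rpow_le_rpow hR0 hRle (by positivity)
      have hsplit : ((1024 : ℝ) * M ^ 6) ^ (ε / 6) = 1024 ^ (ε / 6) * (M ^ 6) ^ (ε / 6) :=
        Real.mul_rpow (by norm_num) (by positivity)
      have hM6 : ((M ^ 6 : ℝ)) ^ (ε / 6) = M ^ ε := by
        rw [← Real.rpow_natCast M 6, ← Real.rpow_mul hM0]
        congr 1
        push_cast
        ring
      calc (T.ncard : ℝ) ≤ ((circ R).ncard : ℝ) := by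
            exact_mod_cast Set.ncard_le_ncard hTc (circ_finite R)
        _ ≤ C₁ * (R : ℝ) ^ (ε / 6) := hstep
        _ ≤ C₁ * (1024 ^ (ε / 6) * M ^ ε) := by
            rw [← hM6, ← hsplit]
            exact mul_le_mul_of_nonneg_left hrp (by linarith)
        _ = (C₁ * 1024 ^ (ε / 6)) * M ^ ε := by ring
        _ ≤ C * M ^ ε := mul_le_mul_of_nonneg_right (le_max_right _ _) hMε0

theorem stmt9 (ε : ℝ) (hε : 0 < ε) :
    ∃ C : ℝ, 0 < C ∧ ∀ N N₁ N₂ N₃ : ℝ,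
      IsDyadic N → IsDyadic N₁ → IsDyadic N₂ → IsDyadic N₃ → ∀ m : ℤ, ∀ n n₂ : ℤ × ℤ,
      (({p : (ℤ × ℤ) × (ℤ × ℤ) |
          SMem N N₁ N₂ N₃ m n p.1 n₂ p.2}).ncard : ℝ) ≤ C * (min N₁ N₃) ^ ε := by
  obtain ⟨C, hC1, hC⟩ := cluster_bound ε hε
  refine ⟨C, by linarith, ?_⟩
  intro N N₁ N₂ N₃ hN hN₁ hN₂ hN₃ m n n₂
  set M : ℝ := min N₁ N₃ with hM
  have hM1 : 1 ≤ M := le_min (isDyadic_one_le hN₁) (isDyadic_one_le hN₃)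
  set c : ℤ × ℤ := n + n₂ with hc
  set R : ℤ := nsq (n₂ - n) - 2 * m with hR
  set T : Set (ℤ × ℤ) :=
    {x | nsq x = R ∧ znorm (x + c) ≤ 2 * N₁ ∧ znorm (c - x) ≤ 2 * N₃} with hT
  have hTsub : T ⊆ circ R := fun x hx => hx.1
  have hTfin : T.Finite := (circ_finite R).subset hTsub
  have hinj : ({p : (ℤ × ℤ) × (ℤ × ℤ) |
      SMem N N₁ N₂ N₃ m n p.1 n₂ p.2}).ncard ≤ T.ncard := by
    refine Set.ncard_le_ncard_of_injOn (fun p => p.1 + p.1 - c) ?_ ?_ hTfin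
    · rintro p hp
      obtain ⟨hsum, _, _, hφ, hsn, hs1, hs2, hs3⟩ := hp
      have hb : p.2 = n - p.1 + n₂ := by rw [hsum]; abel
      refine ⟨?_, ?_, ?_⟩
      · show nsq (p.1 + p.1 - c) = R
        rw [hb] at hφ
        rw [hc, hR]
        simp only [phiFn, nsq, Prod.fst_add, Prod.snd_add, Prod.fst_sub, Prod.snd_sub] at hφ ⊢
        linear_combination (-2 : ℤ) * hφ
      · have he : p.1 + p.1 - c + c = p.1 + p.1 := by abel
        show znorm (p.1 + p.1 - c + c) ≤ 2 * N₁
        rw [he, znorm_double]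
        have := simDyadic_le hs1
        linarith
      · have he : c - (p.1 + p.1 - c) = p.2 + p.2 := by rw [hb, hc]; abel
        show znorm (c - (p.1 + p.1 - c)) ≤ 2 * N₃
        rw [he, znorm_double]
        have := simDyadic_le hs3
        linarith
    · intro p hp p' hp' hfe
      simp only at hfe
      have h1 : p.1 = p'.1 := by
        have ha := congrArg Prod.fst hfe
        have hb2 := congrArg Prod.snd hfe
        simp only [Prod.fst_sub, Prod.fst_add, Prod.snd_sub, Prod.snd_add] at ha hb2
        exact Prod.ext (by omega) (by omega)
      have hb : p.2 = n - p.1 + n₂ := by rw [hp.1]; abel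
      have hb' : p'.2 = n - p'.1 + n₂ := by rw [hp'.1]; abel
      exact Prod.ext h1 (by rw [hb, hb', h1])
  have hdiam : ∀ x ∈ T, ∀ y ∈ T, ((nsq (x - y) : ℤ) : ℝ) ≤ 16 * M ^ 2 := by
    intro x hx y hy
    obtain ⟨_, hx1, hx2⟩ := hx
    obtain ⟨_, hy1, hy2⟩ := hy
    have e1 : x - y = (x + c) - (y + c) := by abel
    have e2 : x - y = (c - y) - (c - x) := by abel
    have t1 : znorm (x - y) ≤ 4 * N₁ := by
      rw [e1]
      refine le_trans (znorm_sub_le _ _) ?_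
      linarith
    have t2 : znorm (x - y) ≤ 4 * N₃ := by
      rw [e2]
      refine le_trans (znorm_sub_le _ _) ?_
      linarith
    have t : znorm (x - y) ≤ 4 * M := by
      rcases le_total N₁ N₃ with h | h
      · rw [hM, min_eq_left h]; exact t1
      · rw [hM, min_eq_right h]; exact t2
    have hzn : ((nsq (x - y) : ℤ) : ℝ) = znorm (x - y) ^ 2 := (znorm_sq _).symm
    rw [hzn]
    calc znorm (x - y) ^ 2 ≤ (4 * M) ^ 2 :=
        pow_le_pow_left₀ (znorm_nonneg _) t 2
      _ = 16 * M ^ 2 := by ring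
  have hfinal := hC R M T hM1 hTsub hdiam
  calc (({p : (ℤ × ℤ) × (ℤ × ℤ) |
        SMem N N₁ N₂ N₃ m n p.1 n₂ p.2}).ncard : ℝ) ≤ (T.ncard : ℝ) := by
        exact_mod_cast hinj
    _ ≤ C * M ^ ε := hfinal
end
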